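/- arXiv:1204.0354 — 3 statements merged into one kernel-verified Lean document; each statement's English description precedes it below -/
import Mathlib

section
/- Let T be a finite tree on n vertices, s_1 ≠ s_2 vertices with ρ(s_1,s_2) = (s_1, u_1, …, u_m, s_2). For 1 ≤ i ≤ j ≤ m define q(u_i, u_j) by the recursion q(v,v) = |T_v(s_1,s_2)|^{-1} and q(u_i,u_j) = |T_{ρ(u_i,u_j)}(s_1,s_2)|^{-1} (q(u_{i+1},u_j) + q(u_i,u_{j-1})) for i < j, where T_{ρ(u_i,u_j)}(s_1,s_2) = ∪_{v ∈ ρ(u_i,u_j)} T_v(s_1,s_2). Then q(u_1,u_m) = Σ_{ξ ∈ Γ(u_1,u_m)} ∏_{i=1}^m I_i(ξ)^{-1}, where Γ(u_1,u_m) is the set of permutations ξ of {u_1,…,u_m} whose reversal is an infection sequence of the path from {s_1,s_2}, and I_i(ξ) = Σ_{j ≤ i} |T_{ξ_j}(s_1,s_2)|. -/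
/-- `σ` is an infection sequence on vertex set `A` from source set `S`. -/
def IsInfSeqOn {V : Type*} (G : SimpleGraph V) (A S : Set V) (σ : List V) : Prop :=
  σ.Nodup ∧ (∀ v, v ∈ σ ↔ v ∈ A \ S) ∧
  ∀ i (h : i < σ.length), ∃ u, (u ∈ S ∨ u ∈ σ.take i) ∧ G.Adj u σ[i]

/-- The subtree `T_u(s₁,s₂)` hanging off `u` relative to the path between `s₁` and `s₂`:
vertices `v` all of whose walks to `s₁` and to `s₂` pass through `u`. -/
def pairSubtree {V : Type*} (G : SimpleGraph V) (s₁ s₂ u : V) : Set V :=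
  {v | (∀ p : G.Walk v s₁, u ∈ p.support) ∧ (∀ p : G.Walk v s₂, u ∈ p.support)}

/-- The set of vertices lying on the (unique, in a tree) path between `s₁` and `s₂`. -/
def onPath {V : Type*} (G : SimpleGraph V) (s₁ s₂ : V) : Set V :=
  {v | ∀ p : G.Walk s₁ s₂, p.IsPath → v ∈ p.support}

/-- `I_i(ξ; s₁, s₂)`: total number of vertices in the subtrees rooted at the first `i`
elements of the list `ξ`. -/
noncomputable def Ifun {V : Type*} (G : SimpleGraph V) (s₁ s₂ : V) (ξ : List V)
    (i : ℕ) : ℕ :=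
  ((ξ.take i).map fun v => (pairSubtree G s₁ s₂ v).ncard).sum

/-- `|T_{ρ(u_i,u_j)}(s₁,s₂)|`: total size of the union of the subtrees hanging off the
path segment `u_i, …, u_j`. -/
noncomputable def segSize {V : Type*} (G : SimpleGraph V) (s₁ s₂ : V) (u : ℕ → V)
    (i j : ℕ) : ℕ :=
  (⋃ k ∈ Set.Icc i j, pairSubtree G s₁ s₂ (u k)).ncard

def Gam : ℕ → ℕ → ℕ → Finset (List ℕ)
  | 0, a, _ => {[a]}
  | n+1, a, b => ((Gam n (a+1) b).image (· ++ [a])) ∪ ((Gam n a (b-1)).image (· ++ [b]))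

lemma Gam_spec : ∀ n a, ∀ l ∈ Gam n a (a+n),
    l.length = n+1 ∧ l.Nodup ∧ (∀ x, x ∈ l ↔ x ∈ Finset.Icc a (a+n)) := by
  intro n
  induction n with
  | zero =>
    intro a l hl
    simp only [Gam, Finset.mem_singleton] at hl
    subst hl
    simp
  | succ n ih =>
    intro a l hl
    simp only [Gam, Finset.mem_union, Finset.mem_image] at hl
    rcases hl with ⟨l', hl', rfl⟩ | ⟨l', hl', rfl⟩
    · have hb : a + 1 + n = a + (n+1) := by omega
      rw [← hb] at hl'
      obtain ⟨h1, h2, h3⟩ := ih (a+1) l' hl'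
      refine ⟨by simp [h1], ?_, ?_⟩
      · rw [List.nodup_append]
        refine ⟨h2, List.nodup_singleton _, ?_⟩
        intro x hx
        simp only [List.mem_singleton]
        intro hxa
        have := (h3 x).1 hx
        rw [Finset.mem_Icc] at this
        omega
      · intro x
        simp only [List.mem_append, List.mem_singleton, h3, Finset.mem_Icc]
        omega
    · have hb : a + (n+1) - 1 = a + n := by omega
      rw [hb] at hl'
      obtain ⟨h1, h2, h3⟩ := ih a l' hl'
      refine ⟨by simp [h1], ?_, ?_⟩
      · rw [List.nodup_append]
        refine ⟨h2, List.nodup_singleton _, ?_⟩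
        intro x hx
        simp only [List.mem_singleton]
        intro hxa
        have := (h3 x).1 hx
        rw [Finset.mem_Icc] at this
        omega
      · intro x
        simp only [List.mem_append, List.mem_singleton, h3, Finset.mem_Icc]
        omega

lemma sum_map_eq_sum_toFinset (l : List ℕ) (hl : l.Nodup) (w : ℕ → ℝ) :
    (l.map w).sum = ∑ x ∈ l.toFinset, w x := by
  induction l with
  | nil => simp
  | cons a t ih =>
    simp only [List.map_cons, List.sum_cons, List.toFinset_cons]
    rw [List.nodup_cons] at hl
    rw [Finset.sum_insert (by simpa using hl.1), ih hl.2]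

lemma gam_sum (w : ℕ → ℝ) (q : ℕ → ℕ → ℝ) (m : ℕ)
    (hq1 : ∀ i, 1 ≤ i → i ≤ m → q i i = (w i)⁻¹)
    (hq2 : ∀ i j, 1 ≤ i → i < j → j ≤ m →
      q i j = (∑ k ∈ Finset.Icc i j, w k)⁻¹ * (q (i+1) j + q i (j-1))) :
    ∀ n a, 1 ≤ a → a + n ≤ m →
      q a (a+n) = ∑ l ∈ Gam n a (a+n),
        ∏ i ∈ Finset.range (n+1), (((l.take (i+1)).map w).sum)⁻¹ := by
  intro n
  induction n with
  | zero =>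
    intro a ha ham
    simp only [Nat.add_zero] at *
    rw [hq1 a ha ham]
    simp [Gam]
  | succ n ih =>
    intro a ha ham
    have hab : a < a + (n+1) := by omega
    rw [hq2 a (a+(n+1)) ha hab (by omega)]
    have hsub : a + (n + 1) - 1 = a + n := by omega
    have hswap : a + 1 + n = a + (n+1) := by omega
    -- RHS
    have hlen1 : ∀ l' ∈ Gam n (a+1) (a+(n+1)), l'.length = n + 1 := by
      intro l' hl'
      rw [← hswap] at hl'
      exact (Gam_spec n (a+1) l' hl').1
    have hlen2 : ∀ l' ∈ Gam n a (a+n), l'.length = n + 1 := by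
      intro l' hl'
      exact (Gam_spec n a l' hl').1
    have key : ∀ (c : ℕ) (l' : List ℕ), l'.length = n+1 → l'.Nodup →
        (∀ x, x ∈ l' → x ∈ Finset.Icc a (a+(n+1))) → (c ∈ Finset.Icc a (a+(n+1))) →
        (c ∉ l') → ((l' ++ [c]).toFinset = Finset.Icc a (a+(n+1))) →
        (∏ i ∈ Finset.range (n+2), (((( l' ++ [c]).take (i+1)).map w).sum)⁻¹)
          = (∑ k ∈ Finset.Icc a (a+(n+1)), w k)⁻¹ *
            ∏ i ∈ Finset.range (n+1), (((l'.take (i+1)).map w).sum)⁻¹ := by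
      intro c l' hlen hnd hsub' hc hcl hfin
      rw [Finset.prod_range_succ]
      have h1 : ∀ i ∈ Finset.range (n+1),
          ((((l' ++ [c]).take (i+1)).map w).sum)⁻¹ = (((l'.take (i+1)).map w).sum)⁻¹ := by
        intro i hi
        simp only [Finset.mem_range] at hi
        rw [List.take_append_of_le_length (by omega)]
      rw [Finset.prod_congr rfl h1]
      have h2 : (l' ++ [c]).take (n+2) = l' ++ [c] := by
        apply List.take_of_length_le
        simp [hlen]
      rw [h2]
      have hnd2 : (l' ++ [c]).Nodup := by
        rw [List.nodup_append']
        refine ⟨hnd, List.nodup_singleton _, fun x hx => ?_⟩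
        simp only [List.mem_singleton]
        intro h
        exact hcl (h ▸ hx)
      rw [sum_map_eq_sum_toFinset _ hnd2, hfin]
      ring
    have hGam : Gam (n+1) a (a+(n+1)) =
        ((Gam n (a+1) (a+(n+1))).image (· ++ [a])) ∪
          ((Gam n a (a+(n+1)-1)).image (· ++ [a+(n+1)])) := rfl
    have hdisj : Disjoint ((Gam n (a+1) (a+(n+1))).image (· ++ [a]))
        ((Gam n a (a+(n+1)-1)).image (· ++ [a+(n+1)])) := by
      rw [Finset.disjoint_left]
      rintro l hl1 hl2
      simp only [Finset.mem_image] at hl1 hl2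
      obtain ⟨x, hx, hxl⟩ := hl1
      obtain ⟨y, hy, hyl⟩ := hl2
      rw [← hyl] at hxl
      have h2 := (List.append_inj' hxl rfl).2
      simp only [List.cons.injEq, and_true] at h2
      omega
    rw [hGam, Finset.sum_union hdisj, Finset.sum_image (fun x _ y _ h => by
          simpa using List.append_inj' h rfl),
      Finset.sum_image (fun x _ y _ h => by simpa using List.append_inj' h rfl)]
    have e1 : ∀ l' ∈ Gam n (a+1) (a+(n+1)),
        (∏ i ∈ Finset.range (n+1+1), ((((l' ++ [a]).take (i+1)).map w).sum)⁻¹)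
          = (∑ k ∈ Finset.Icc a (a+(n+1)), w k)⁻¹ *
            ∏ i ∈ Finset.range (n+1), (((l'.take (i+1)).map w).sum)⁻¹ := by
      intro l' hl'
      rw [← hswap] at hl'
      obtain ⟨g1, g2, g3⟩ := Gam_spec n (a+1) l' hl'
      refine key a l' g1 g2 ?_ ?_ ?_ ?_
      · intro x hx
        have := (g3 x).1 hx
        rw [Finset.mem_Icc] at this ⊢
        omega
      · rw [Finset.mem_Icc]; omega
      · intro hal'
        have := (g3 a).1 hal'
        rw [Finset.mem_Icc] at this
        omega
      · ext x
        simp only [List.toFinset_append, Finset.mem_union, List.mem_toFinset, g3,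
          List.toFinset_cons, List.toFinset_nil, insert_empty_eq,
          Finset.mem_singleton, Finset.mem_Icc]
        omega
    have e2 : ∀ l' ∈ Gam n a (a+(n+1)-1),
        (∏ i ∈ Finset.range (n+1+1), ((((l' ++ [a+(n+1)]).take (i+1)).map w).sum)⁻¹)
          = (∑ k ∈ Finset.Icc a (a+(n+1)), w k)⁻¹ *
            ∏ i ∈ Finset.range (n+1), (((l'.take (i+1)).map w).sum)⁻¹ := by
      intro l' hl'
      rw [hsub] at hl'
      obtain ⟨g1, g2, g3⟩ := Gam_spec n a l' hl'
      refine key (a+(n+1)) l' g1 g2 ?_ ?_ ?_ ?_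
      · intro x hx
        have := (g3 x).1 hx
        rw [Finset.mem_Icc] at this ⊢
        omega
      · rw [Finset.mem_Icc]; omega
      · intro hal'
        have := (g3 (a+(n+1))).1 hal'
        rw [Finset.mem_Icc] at this
        omega
      · ext x
        simp only [List.toFinset_append, Finset.mem_union, List.mem_toFinset, g3,
          List.toFinset_cons, List.toFinset_nil, insert_empty_eq,
          Finset.mem_singleton, Finset.mem_Icc]
        omega
    rw [Finset.sum_congr rfl e1, Finset.sum_congr rfl e2, ← Finset.mul_sum,
      ← Finset.mul_sum]
    have ih1 : q (a+1) (a+(n+1)) = ∑ l ∈ Gam n (a+1) (a+(n+1)),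
        ∏ i ∈ Finset.range (n+1), (((l.take (i+1)).map w).sum)⁻¹ := by
      have := ih (a+1) (by omega) (by omega)
      rwa [hswap] at this
    have ih2 : q a (a+n) = ∑ l ∈ Gam n a (a+n),
        ∏ i ∈ Finset.range (n+1), (((l.take (i+1)).map w).sum)⁻¹ :=
      ih a ha (by omega)
    rw [hsub, ← ih1, ← ih2]
    ring

section Graph
variable {V : Type*} {G : SimpleGraph V}

open SimpleGraph

lemma exists_walk_along (G : SimpleGraph V) (m : ℕ) (u : ℕ → V)
    (huadj : ∀ i < m + 1, G.Adj (u i) (u (i + 1))) :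
    ∀ len i, i + len ≤ m + 1 →
      ∃ p : G.Walk (u i) (u (i + len)),
        p.support = (List.range (len + 1)).map (fun t => u (i + t)) := by
  intro len
  induction len with
  | zero =>
    intro i hi
    refine ⟨SimpleGraph.Walk.nil, ?_⟩
    simp [List.range_succ]
  | succ len ih =>
    intro i hi
    obtain ⟨p', hp'⟩ := ih (i + 1) (by omega)
    have hadj : G.Adj (u i) (u (i + 1)) := huadj i (by omega)
    have hcast : i + 1 + len = i + (len + 1) := by omega
    refine ⟨(SimpleGraph.Walk.cons hadj p').copy rfl (by rw [hcast]), ?_⟩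
    rw [SimpleGraph.Walk.support_copy, SimpleGraph.Walk.support_cons, hp']
    have hlist : List.map (fun t => u (i + t)) (List.range (len + 1 + 1)) =
        u i :: List.map (fun t => u (i + 1 + t)) (List.range (len + 1)) := by
      rw [List.range_succ_eq_map, List.map_cons, List.map_map]
      simp only [Nat.add_zero]
      congr 1
      apply List.map_congr_left
      intro t _
      simp only [Function.comp_apply]
      congr 1
      omega
    rw [hlist]

lemma nodup_walk_along_support (m : ℕ) (u : ℕ → V)
    (huinj : ∀ i ≤ m + 1, ∀ j ≤ m + 1, u i = u j → i = j)
    (len i : ℕ) (hi : i + len ≤ m + 1) :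
    ((List.range (len + 1)).map (fun t => u (i + t))).Nodup := by
  refine List.Nodup.map_on ?_ List.nodup_range
  intro x hx y hy hxy
  simp only [List.mem_range] at hx hy
  have := huinj (i + x) (by omega) (i + y) (by omega) hxy
  omega

lemma exists_canonical_path (G : SimpleGraph V) (m : ℕ) (u : ℕ → V) (s₁ s₂ : V)
    (hu0 : u 0 = s₁) (hum : u (m + 1) = s₂)
    (huinj : ∀ i ≤ m + 1, ∀ j ≤ m + 1, u i = u j → i = j)
    (huadj : ∀ i < m + 1, G.Adj (u i) (u (i + 1))) :
    ∃ P : G.Walk s₁ s₂, P.IsPath ∧ P.support = (List.range (m + 2)).map u := by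
  obtain ⟨p, hp⟩ := exists_walk_along G m u huadj (m + 1) 0 (by omega)
  refine ⟨p.copy hu0 (by rw [show 0 + (m+1) = m + 1 by omega, hum]), ?_, ?_⟩
  · apply SimpleGraph.Walk.IsPath.mk'
    rw [SimpleGraph.Walk.support_copy, hp]
    exact nodup_walk_along_support m u huinj (m + 1) 0 (by omega)
  · rw [SimpleGraph.Walk.support_copy, hp]
    apply List.map_congr_left
    intro t _
    rw [Nat.zero_add]

lemma onPath_eq (hG : G.IsTree) (m : ℕ) (u : ℕ → V) (s₁ s₂ : V)
    (hu0 : u 0 = s₁) (hum : u (m + 1) = s₂)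
    (huinj : ∀ i ≤ m + 1, ∀ j ≤ m + 1, u i = u j → i = j)
    (huadj : ∀ i < m + 1, G.Adj (u i) (u (i + 1))) :
    onPath G s₁ s₂ = u '' {k | k ≤ m + 1} := by
  obtain ⟨P, hP, hPs⟩ := exists_canonical_path G m u s₁ s₂ hu0 hum huinj huadj
  ext v
  constructor
  · intro hv
    have := hv P hP
    rw [hPs, List.mem_map] at this
    obtain ⟨t, ht, rfl⟩ := this
    rw [List.mem_range] at ht
    exact ⟨t, by simp only [Set.mem_setOf_eq]; omega, rfl⟩
  · rintro ⟨k, hk, rfl⟩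
    simp only [Set.mem_setOf_eq] at hk
    intro p hp
    have : p = P := (hG.existsUnique_path s₁ s₂).unique hp hP
    rw [this, hPs, List.mem_map]
    exact ⟨k, by rw [List.mem_range]; omega, rfl⟩

lemma adj_indices (hG : G.IsTree) (m : ℕ) (u : ℕ → V)
    (huinj : ∀ i ≤ m + 1, ∀ j ≤ m + 1, u i = u j → i = j)
    (huadj : ∀ i < m + 1, G.Adj (u i) (u (i + 1))) :
    ∀ i j, i ≤ m + 1 → j ≤ m + 1 → G.Adj (u i) (u j) → (j = i + 1 ∨ i = j + 1) := by
  have main : ∀ i j, i ≤ m + 1 → j ≤ m + 1 → i < j → G.Adj (u i) (u j) → j = i + 1 := by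
    intro i j hi hj hij hadj
    by_contra hne
    obtain ⟨p, hp⟩ := exists_walk_along G m u huadj (j - i) i (by omega)
    set Q := p.copy rfl (by rw [show i + (j - i) = j by omega]) with hQdef
    have hQsup : Q.support = (List.range (j - i + 1)).map (fun t => u (i + t)) := by
      rw [hQdef, SimpleGraph.Walk.support_copy, hp]
    have hQpath : Q.IsPath := by
      apply SimpleGraph.Walk.IsPath.mk'
      rw [hQsup]
      exact nodup_walk_along_support m u huinj (j - i) i (by omega)
    have hEpath : (SimpleGraph.Walk.cons hadj SimpleGraph.Walk.nil).IsPath := by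
      rw [SimpleGraph.Walk.isPath_def]
      simp [hadj.ne]
    have hQE : Q = SimpleGraph.Walk.cons hadj SimpleGraph.Walk.nil :=
      (hG.existsUnique_path (u i) (u j)).unique hQpath hEpath
    have h2 : Q.support.length = j - i + 1 := by rw [hQsup]; simp
    have h3 : Q.length = 1 := by rw [hQE]; simp
    have h4 := SimpleGraph.Walk.length_support Q
    omega
  intro i j hi hj hadj
  rcases Nat.lt_trichotomy i j with h | h | h
  · exact Or.inl (main i j hi hj h hadj)
  · exact absurd (h ▸ rfl) hadj.ne
  · exact Or.inr (main j i hj hi h hadj.symm)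

lemma not_end_mem_takeUntil [DecidableEq V] {v y z : V} (p : G.Walk v y) (hp : p.IsPath)
    (h : z ∈ p.support) (hzy : z ≠ y) : y ∉ (p.takeUntil z h).support := by
  have hspec := p.take_spec h
  have hnd := hp.support_nodup
  rw [← hspec, SimpleGraph.Walk.support_append] at hnd
  intro hy
  have hy2 : y ∈ (p.dropUntil z h).support.tail := by
    have h1 : y ∈ (p.dropUntil z h).support := SimpleGraph.Walk.end_mem_support _
    rw [SimpleGraph.Walk.support_eq_cons] at h1
    rcases List.mem_cons.mp h1 with h1 | h1
    · exact absurd h1.symm hzy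
    · exact h1
  exact (List.nodup_append'.mp hnd).2.2 hy hy2

lemma walk_to_s₁ (G : SimpleGraph V) (m : ℕ) (u : ℕ → V) (s₁ : V)
    (hu0 : u 0 = s₁) (huadj : ∀ i < m + 1, G.Adj (u i) (u (i + 1)))
    (k : ℕ) (hk : k ≤ m + 1) :
    ∃ W : G.Walk (u k) s₁, ∀ x ∈ W.support, ∃ t, t ≤ k ∧ x = u t := by
  obtain ⟨q, hq⟩ := exists_walk_along G m u huadj k 0 (by omega)
  refine ⟨(q.copy hu0 (by rw [Nat.zero_add])).reverse, ?_⟩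
  intro x hx
  rw [SimpleGraph.Walk.support_reverse, List.mem_reverse,
    SimpleGraph.Walk.support_copy, hq, List.mem_map] at hx
  obtain ⟨t, ht, rfl⟩ := hx
  rw [List.mem_range] at ht
  exact ⟨0 + t, by omega, rfl⟩

lemma walk_to_s₂ (G : SimpleGraph V) (m : ℕ) (u : ℕ → V) (s₂ : V)
    (hum : u (m + 1) = s₂) (huadj : ∀ i < m + 1, G.Adj (u i) (u (i + 1)))
    (k : ℕ) (hk : k ≤ m + 1) :
    ∃ W : G.Walk (u k) s₂, ∀ x ∈ W.support, ∃ t, k ≤ t ∧ t ≤ m + 1 ∧ x = u t := by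
  obtain ⟨q, hq⟩ := exists_walk_along G m u huadj (m + 1 - k) k (by omega)
  refine ⟨q.copy rfl (by rw [show k + (m + 1 - k) = m + 1 by omega, hum]), ?_⟩
  intro x hx
  rw [SimpleGraph.Walk.support_copy, hq, List.mem_map] at hx
  obtain ⟨t, ht, rfl⟩ := hx
  rw [List.mem_range] at ht
  exact ⟨k + t, by omega, by omega, rfl⟩

lemma subtree_avoid [DecidableEq V] (hG : G.IsTree) (m : ℕ) (u : ℕ → V) (s₁ s₂ : V)
    (hu0 : u 0 = s₁) (hum : u (m + 1) = s₂)
    (huinj : ∀ i ≤ m + 1, ∀ j ≤ m + 1, u i = u j → i = j)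
    (huadj : ∀ i < m + 1, G.Adj (u i) (u (i + 1))) :
    ∀ k ≤ m + 1, ∀ l ≤ m + 1, l ≠ k → ∀ v ∈ pairSubtree G s₁ s₂ (u k),
      ∃ p : G.Walk v (u k), u l ∉ p.support := by
  intro k hk l hl hlk v hv
  obtain ⟨p, hp, -⟩ := hG.existsUnique_path v (u k)
  refine ⟨p, fun h => ?_⟩
  have hlkne : u l ≠ u k := fun he => hlk (huinj l hl k hk he)
  have ht' : u k ∉ (p.takeUntil (u l) h).support :=
    not_end_mem_takeUntil p hp h hlkne
  rcases Nat.lt_or_ge l k with hcase | hcase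
  · obtain ⟨W, hW⟩ := walk_to_s₁ G m u s₁ hu0 huadj l hl
    have hfull := hv.1 ((p.takeUntil (u l) h).append W)
    rw [SimpleGraph.Walk.support_append, List.mem_append] at hfull
    rcases hfull with hfull | hfull
    · exact ht' hfull
    · obtain ⟨t, ht, hte⟩ := hW (u k) (List.mem_of_mem_tail hfull)
      have := huinj k hk t (by omega) hte
      omega
  · have hcase' : k < l := by omega
    obtain ⟨W, hW⟩ := walk_to_s₂ G m u s₂ hum huadj l hl
    have hfull := hv.2 ((p.takeUntil (u l) h).append W)
    rw [SimpleGraph.Walk.support_append, List.mem_append] at hfull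
    rcases hfull with hfull | hfull
    · exact ht' hfull
    · obtain ⟨t, ht1, ht2, hte⟩ := hW (u k) (List.mem_of_mem_tail hfull)
      have := huinj k hk t (by omega) hte
      omega

lemma subtree_disjoint [DecidableEq V] (hG : G.IsTree) (m : ℕ) (u : ℕ → V) (s₁ s₂ : V)
    (hu0 : u 0 = s₁) (hum : u (m + 1) = s₂)
    (huinj : ∀ i ≤ m + 1, ∀ j ≤ m + 1, u i = u j → i = j)
    (huadj : ∀ i < m + 1, G.Adj (u i) (u (i + 1))) :
    ∀ k ≤ m + 1, ∀ l ≤ m + 1, k ≠ l →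
      Disjoint (pairSubtree G s₁ s₂ (u k)) (pairSubtree G s₁ s₂ (u l)) := by
  intro k hk l hl hkl
  rw [Set.disjoint_left]
  intro v hvk hvl
  obtain ⟨p, hpl⟩ := subtree_avoid hG m u s₁ s₂ hu0 hum huinj huadj k hk l hl
    (fun he => hkl he.symm) v hvk
  rcases Nat.lt_or_ge l k with hcase | hcase
  · obtain ⟨W, hW⟩ := walk_to_s₂ G m u s₂ hum huadj k hk
    have hfull := hvl.2 (p.append W)
    rw [SimpleGraph.Walk.support_append, List.mem_append] at hfull
    rcases hfull with hfull | hfull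
    · exact hpl hfull
    · obtain ⟨t, ht1, ht2, hte⟩ := hW (u l) (List.mem_of_mem_tail hfull)
      have := huinj l hl t (by omega) hte
      omega
  · have hcase' : k < l := by omega
    obtain ⟨W, hW⟩ := walk_to_s₁ G m u s₁ hu0 huadj k hk
    have hfull := hvl.1 (p.append W)
    rw [SimpleGraph.Walk.support_append, List.mem_append] at hfull
    rcases hfull with hfull | hfull
    · exact hpl hfull
    · obtain ⟨t, ht, hte⟩ := hW (u l) (List.mem_of_mem_tail hfull)
      have := huinj l hl t (by omega) hte
      omega

lemma segSize_eq_sum [Fintype V] [DecidableEq V] (hG : G.IsTree) (m : ℕ) (u : ℕ → V)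
    (s₁ s₂ : V) (hu0 : u 0 = s₁) (hum : u (m + 1) = s₂)
    (huinj : ∀ i ≤ m + 1, ∀ j ≤ m + 1, u i = u j → i = j)
    (huadj : ∀ i < m + 1, G.Adj (u i) (u (i + 1)))
    (a b : ℕ) (hb : b ≤ m + 1) :
    segSize G s₁ s₂ u a b = ∑ k ∈ Finset.Icc a b, (pairSubtree G s₁ s₂ (u k)).ncard := by
  have hfin : ∀ k, (pairSubtree G s₁ s₂ (u k)).Finite := fun k => Set.toFinite _
  have hU : (⋃ k ∈ Set.Icc a b, pairSubtree G s₁ s₂ (u k)) =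
      ↑((Finset.Icc a b).biUnion (fun k => (hfin k).toFinset)) := by
    ext x
    simp only [Set.mem_iUnion, Finset.coe_biUnion, Finset.mem_coe, Finset.mem_biUnion,
      Set.Finite.mem_toFinset, Finset.mem_Icc, Set.mem_Icc, exists_prop]
  rw [segSize, hU, Set.ncard_coe_finset, Finset.card_biUnion]
  · exact Finset.sum_congr rfl fun k _ => (Set.ncard_eq_toFinset_card _ (hfin k)).symm
  · intro k hk l hl hkl
    rw [Function.onFun, Set.Finite.disjoint_toFinset]
    rw [Finset.mem_coe, Finset.mem_Icc] at hk hl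
    exact subtree_disjoint hG m u s₁ s₂ hu0 hum huinj huadj k (by omega) l (by omega) hkl

end Graph

lemma infseq_mem_Gam : ∀ n a, 1 ≤ a → ∀ σ : List ℕ, σ.Nodup →
    (∀ x, x ∈ σ ↔ x ∈ Finset.Icc a (a + n)) →
    (∀ i (h : i < σ.length), ∃ j, (j < a ∨ a + n < j ∨ j ∈ σ.take i) ∧
      (j + 1 = σ[i] ∨ σ[i] + 1 = j)) →
    σ.reverse ∈ Gam n a (a + n) := by
  intro n
  induction n with
  | zero =>
    intro a ha σ hnd hmem hcond
    have haσ : a ∈ σ := (hmem a).2 (by simp)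
    obtain ⟨h, t, rfl⟩ : ∃ h t, σ = h :: t := by
      cases σ with
      | nil => simp at haσ
      | cons h t => exact ⟨h, t, rfl⟩
    have hh : a = h := by
      have := (hmem h).1 List.mem_cons_self
      simp only [Nat.add_zero, Finset.mem_Icc] at this
      omega
    subst hh
    have ht : t = [] := by
      rw [List.eq_nil_iff_forall_not_mem]
      intro x hx
      have hxi := (hmem x).1 (List.mem_cons_of_mem _ hx)
      simp only [Nat.add_zero, Finset.mem_Icc] at hxi
      have hxa : x = a := by omega
      subst hxa
      exact (List.nodup_cons.mp hnd).1 hx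
    subst ht
    simp [Gam]
  | succ n ih =>
    intro a ha σ hnd hmem hcond
    have haσ : a ∈ σ := (hmem a).2 (by simp)
    obtain ⟨h, t, rfl⟩ : ∃ h t, σ = h :: t := by
      cases σ with
      | nil => simp at haσ
      | cons h t => exact ⟨h, t, rfl⟩
    have hhicc := (hmem h).1 List.mem_cons_self
    rw [Finset.mem_Icc] at hhicc
    have hha : a = h ∨ a + (n + 1) = h := by
      obtain ⟨j, hj1, hj2⟩ := hcond 0 (by simp)
      simp only [List.take_zero, List.not_mem_nil, or_false] at hj1
      simp only [List.getElem_cons_zero] at hj2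
      omega
    have hndt : t.Nodup := (List.nodup_cons.mp hnd).2
    have hht : h ∉ t := (List.nodup_cons.mp hnd).1
    rcases hha with rfl | rfl
    · -- h = a : peel from left
      have hmem' : ∀ x, x ∈ t ↔ x ∈ Finset.Icc (a + 1) (a + 1 + n) := by
        intro x
        constructor
        · intro hx
          have := (hmem x).1 (List.mem_cons_of_mem _ hx)
          rw [Finset.mem_Icc] at this ⊢
          have hxa : x ≠ a := fun he => hht (he ▸ hx)
          omega
        · intro hx
          rw [Finset.mem_Icc] at hx
          have := (hmem x).2 (by rw [Finset.mem_Icc]; omega)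
          rcases List.mem_cons.mp this with he | ht'
          · omega
          · exact ht'
      have hcond' : ∀ i (hi : i < t.length), ∃ j,
          (j < a + 1 ∨ a + 1 + n < j ∨ j ∈ t.take i) ∧
            (j + 1 = t[i] ∨ t[i] + 1 = j) := by
        intro i hi
        obtain ⟨j, hj1, hj2⟩ := hcond (i + 1) (by simp only [List.length_cons]; omega)
        simp only [List.getElem_cons_succ] at hj2
        refine ⟨j, ?_, hj2⟩
        rw [List.take_succ_cons] at hj1
        rcases hj1 with h1 | h1 | h1
        · left; omega
        · right; left; omega
        · rcases List.mem_cons.mp h1 with he | ht'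
          · left; omega
          · right; right; exact ht'
      have hih := ih (a + 1) (by omega) t hndt hmem' hcond'
      show (a :: t).reverse ∈ Gam (n+1) a (a + (n+1))
      rw [List.reverse_cons]
      have hGam : Gam (n+1) a (a+(n+1)) =
          ((Gam n (a+1) (a+(n+1))).image (· ++ [a])) ∪
            ((Gam n a (a+(n+1)-1)).image (· ++ [a+(n+1)])) := rfl
      rw [hGam]
      apply Finset.mem_union_left
      rw [Finset.mem_image]
      exact ⟨t.reverse, by rwa [show a + 1 + n = a + (n+1) by omega] at hih, rfl⟩
    · -- h = a + (n+1) : peel from right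
      have hmem' : ∀ x, x ∈ t ↔ x ∈ Finset.Icc a (a + n) := by
        intro x
        constructor
        · intro hx
          have := (hmem x).1 (List.mem_cons_of_mem _ hx)
          rw [Finset.mem_Icc] at this ⊢
          have hxa : x ≠ a + (n+1) := fun he => hht (he ▸ hx)
          omega
        · intro hx
          rw [Finset.mem_Icc] at hx
          have := (hmem x).2 (by rw [Finset.mem_Icc]; omega)
          rcases List.mem_cons.mp this with he | ht'
          · omega
          · exact ht'
      have hcond' : ∀ i (hi : i < t.length), ∃ j,
          (j < a ∨ a + n < j ∨ j ∈ t.take i) ∧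
            (j + 1 = t[i] ∨ t[i] + 1 = j) := by
        intro i hi
        obtain ⟨j, hj1, hj2⟩ := hcond (i + 1) (by simp only [List.length_cons]; omega)
        simp only [List.getElem_cons_succ] at hj2
        refine ⟨j, ?_, hj2⟩
        rw [List.take_succ_cons] at hj1
        rcases hj1 with h1 | h1 | h1
        · left; omega
        · right; left; omega
        · rcases List.mem_cons.mp h1 with he | ht'
          · right; left; omega
          · right; right; exact ht'
      have hih := ih a ha t hndt hmem' hcond'
      show ((a + (n+1)) :: t).reverse ∈ Gam (n+1) a (a + (n+1))
      rw [List.reverse_cons]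
      have hGam : Gam (n+1) a (a+(n+1)) =
          ((Gam n (a+1) (a+(n+1))).image (· ++ [a])) ∪
            ((Gam n a (a+(n+1)-1)).image (· ++ [a+(n+1)])) := rfl
      rw [hGam]
      apply Finset.mem_union_right
      rw [Finset.mem_image]
      exact ⟨t.reverse, by rwa [show a + (n+1) - 1 = a + n by omega], rfl⟩

lemma Gam_infseq : ∀ n a, 1 ≤ a → ∀ l ∈ Gam n a (a + n),
    ∀ i (hi : i < l.reverse.length), ∃ j,
      (j = a - 1 ∨ j = a + n + 1 ∨ j ∈ l.reverse.take i) ∧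
        (j + 1 = l.reverse[i] ∨ l.reverse[i] + 1 = j) := by
  intro n
  induction n with
  | zero =>
    intro a ha l hl i hi
    simp only [Gam, Finset.mem_singleton] at hl
    subst hl
    have hi0 : i = 0 := by
      simp only [List.reverse_cons, List.reverse_nil, List.nil_append, List.length_cons,
        List.length_nil] at hi
      omega
    subst hi0
    refine ⟨a - 1, Or.inl rfl, Or.inl ?_⟩
    simp only [List.reverse_cons, List.reverse_nil, List.nil_append, List.getElem_cons_zero]
    omega
  | succ n ih =>
    intro a ha l hl i hi
    have hGam : Gam (n+1) a (a+(n+1)) =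
        ((Gam n (a+1) (a+(n+1))).image (· ++ [a])) ∪
          ((Gam n a (a+(n+1)-1)).image (· ++ [a+(n+1)])) := rfl
    rw [hGam, Finset.mem_union, Finset.mem_image, Finset.mem_image] at hl
    rcases hl with ⟨l', hl', rfl⟩ | ⟨l', hl', rfl⟩
    · have hl'' : l' ∈ Gam n (a+1) ((a+1)+n) := by
        rwa [show a + 1 + n = a + (n+1) by omega]
      have hrev : (l' ++ [a]).reverse = a :: l'.reverse := by simp
      rcases Nat.eq_zero_or_pos i with rfl | hipos
      · refine ⟨a - 1, Or.inl rfl, Or.inl ?_⟩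
        simp only [hrev, List.getElem_cons_zero]
        omega
      · obtain ⟨i', rfl⟩ : ∃ i', i = i' + 1 := ⟨i - 1, by omega⟩
        simp only [hrev, List.length_cons, List.length_reverse] at hi
        obtain ⟨j, hj1, hj2⟩ := ih (a+1) (by omega) l' hl'' i'
          (by simp only [List.length_reverse]; omega)
        simp only [hrev, List.getElem_cons_succ, List.take_succ_cons]
        refine ⟨j, ?_, hj2⟩
        rcases hj1 with h1 | h1 | h1
        · right; right
          rw [List.mem_cons]
          left; omega
        · right; left; omega
        · right; right; exact List.mem_cons_of_mem _ h1
    · rw [show a + (n+1) - 1 = a + n by omega] at hl'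
      have hrev : (l' ++ [a + (n+1)]).reverse = (a + (n+1)) :: l'.reverse := by simp
      rcases Nat.eq_zero_or_pos i with rfl | hipos
      · refine ⟨a + (n+1) + 1, Or.inr (Or.inl rfl), Or.inr ?_⟩
        simp only [hrev, List.getElem_cons_zero]
      · obtain ⟨i', rfl⟩ : ∃ i', i = i' + 1 := ⟨i - 1, by omega⟩
        simp only [hrev, List.length_cons, List.length_reverse] at hi
        obtain ⟨j, hj1, hj2⟩ := ih a ha l' hl' i'
          (by simp only [List.length_reverse]; omega)
        simp only [hrev, List.getElem_cons_succ, List.take_succ_cons]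
        refine ⟨j, ?_, hj2⟩
        rcases hj1 with h1 | h1 | h1
        · left; omega
        · right; right
          rw [List.mem_cons]
          left; omega
        · right; right; exact List.mem_cons_of_mem _ h1

/-- Lemma 2 (second part): the function `q` defined by the recursion
`q(v,v) = |T_v|⁻¹`, `q(u_i,u_j) = |T_{ρ(u_i,u_j)}|⁻¹ (q(u_{i+1},u_j) + q(u_i,u_{j-1}))`
equals the sum over reverse infection sequences `ξ` of the path of `∏ I_i(ξ)⁻¹`. -/
theorem q_recursion_eq_sum {V : Type*} [Fintype V] (G : SimpleGraph V)
    (hG : G.IsTree) (s₁ s₂ : V) (hne : s₁ ≠ s₂) (m : ℕ) (hm : 1 ≤ m) (u : ℕ → V)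
    (hu0 : u 0 = s₁) (hum : u (m + 1) = s₂)
    (huinj : ∀ i ≤ m + 1, ∀ j ≤ m + 1, u i = u j → i = j)
    (huadj : ∀ i < m + 1, G.Adj (u i) (u (i + 1)))
    (q : ℕ → ℕ → ℝ)
    (hq1 : ∀ i, 1 ≤ i → i ≤ m → q i i = ((pairSubtree G s₁ s₂ (u i)).ncard : ℝ)⁻¹)
    (hq2 : ∀ i j, 1 ≤ i → i < j → j ≤ m →
      q i j = ((segSize G s₁ s₂ u i j : ℝ))⁻¹ * (q (i + 1) j + q i (j - 1))) :
    q 1 m = ∑ᶠ ξ ∈ {ξ : List V | IsInfSeqOn G (onPath G s₁ s₂) {s₁, s₂} ξ.reverse},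
      ∏ i ∈ Finset.range m, ((Ifun G s₁ s₂ ξ (i + 1) : ℝ))⁻¹ := by
  classical
  set wN : ℕ → ℕ := fun k => (pairSubtree G s₁ s₂ (u k)).ncard with hwN
  set w : ℕ → ℝ := fun k => ((wN k : ℕ) : ℝ) with hw
  -- index function
  obtain ⟨idx, hidx⟩ : ∃ idx : V → ℕ, ∀ k ≤ m + 1, idx (u k) = k := by
    refine ⟨fun v => if h : ∃ k, k ≤ m + 1 ∧ u k = v then h.choose else 0, ?_⟩
    intro k hk
    have h : ∃ j, j ≤ m + 1 ∧ u j = u k := ⟨k, hk, rfl⟩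
    simp only [dif_pos h]
    exact huinj h.choose h.choose_spec.1 k hk h.choose_spec.2
  -- characterization of the interior vertices
  have hAS : ∀ v, v ∈ onPath G s₁ s₂ \ ({s₁, s₂} : Set V) ↔
      ∃ k, 1 ≤ k ∧ k ≤ m ∧ v = u k := by
    intro v
    rw [onPath_eq hG m u s₁ s₂ hu0 hum huinj huadj]
    constructor
    · rintro ⟨⟨k, hk, rfl⟩, hns⟩
      simp only [Set.mem_setOf_eq] at hk
      simp only [Set.mem_insert_iff, Set.mem_singleton_iff, not_or] at hns
      refine ⟨k, ?_, ?_, rfl⟩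
      · rcases Nat.eq_zero_or_pos k with rfl | h1
        · exact absurd hu0 hns.1
        · omega
      · by_cases hkm : k = m + 1
        · exact absurd (hkm ▸ hum) hns.2
        · omega
    · rintro ⟨k, hk1, hkm, rfl⟩
      constructor
      · exact ⟨k, by simp only [Set.mem_setOf_eq]; omega, rfl⟩
      · simp only [Set.mem_insert_iff, Set.mem_singleton_iff, not_or]
        constructor
        · rw [← hu0]
          intro he
          have := huinj k (by omega) 0 (by omega) he
          omega
        · rw [← hum]
          intro he
          have := huinj k (by omega) (m+1) (by omega) he
          omega
  have hm1 : 1 + (m - 1) = m := by omega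
  -- the set of infection sequences is the image of Gam
  have hset : {ξ : List V | IsInfSeqOn G (onPath G s₁ s₂) {s₁, s₂} ξ.reverse} =
      ↑((Gam (m - 1) 1 m).image (List.map u)) := by
    ext ξ
    simp only [Set.mem_setOf_eq, Finset.coe_image, Set.mem_image, Finset.mem_coe]
    constructor
    · rintro ⟨hnd, hmemv, hcond⟩
      set σ := ξ.reverse with hσ
      set lσ := σ.map idx with hlσ
      have hback : ∀ v ∈ σ, u (idx v) = v ∧ 1 ≤ idx v ∧ idx v ≤ m := by
        intro v hv
        obtain ⟨k, hk1, hkm, rfl⟩ := (hAS v).1 ((hmemv v).1 hv)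
        rw [hidx k (by omega)]
        exact ⟨rfl, hk1, hkm⟩
      have hσeq : σ = lσ.map u := by
        rw [hlσ, List.map_map]
        exact (List.map_congr_left fun v hv => ((hback v hv).1).symm).symm ▸
          (σ.map_id).symm ▸ rfl
      have hndl : lσ.Nodup := by
        refine List.Nodup.map_on ?_ hnd
        intro x hx y hy hxy
        rw [← (hback x hx).1, ← (hback y hy).1, hxy]
      have hmeml : ∀ x, x ∈ lσ ↔ x ∈ Finset.Icc 1 (1 + (m - 1)) := by
        intro x
        rw [hm1, Finset.mem_Icc]
        constructor
        · intro hx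
          obtain ⟨v, hv, rfl⟩ := List.mem_map.mp hx
          exact ⟨(hback v hv).2.1, (hback v hv).2.2⟩
        · rintro ⟨h1, h2⟩
          have : u x ∈ σ := (hmemv (u x)).2 ((hAS (u x)).2 ⟨x, h1, h2, rfl⟩)
          rw [hlσ]
          exact List.mem_map.mpr ⟨u x, this, hidx x (by omega)⟩
      have hcondl : ∀ i (hi : i < lσ.length), ∃ j,
          (j < 1 ∨ 1 + (m - 1) < j ∨ j ∈ lσ.take i) ∧
            (j + 1 = lσ[i] ∨ lσ[i] + 1 = j) := by
        intro i hi
        have hilen : i < σ.length := by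
          rw [hlσ, List.length_map] at hi
          exact hi
        obtain ⟨v, hv1, hv2⟩ := hcond i hilen
        have hσi : σ[i] ∈ σ := List.getElem_mem _
        have hσi' : lσ[i] = idx σ[i] := by
          simp only [hlσ, List.getElem_map]
        have hbi := hback σ[i] hσi
        have hadj2 : G.Adj v (u lσ[i]) := by
          rw [hσi', hbi.1]
          exact hv2
        rcases hv1 with hvS | hvtake
        · rcases hvS with rfl | rfl
          · -- v = s₁
            refine ⟨0, Or.inl (by omega), ?_⟩
            rw [← hu0] at hadj2
            have := adj_indices hG m u huinj huadj 0 lσ[i] (by omega)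
              (by rw [hσi']; omega) hadj2
            omega
          · -- v = s₂
            refine ⟨m + 1, Or.inr (Or.inl (by omega)), ?_⟩
            rw [← hum] at hadj2
            have := adj_indices hG m u huinj huadj (m+1) lσ[i] (by omega)
              (by rw [hσi']; omega) hadj2
            omega
        · -- v in earlier part
          have hvσ : v ∈ σ := List.take_subset _ _ hvtake
          have hbv := hback v hvσ
          refine ⟨idx v, Or.inr (Or.inr ?_), ?_⟩
          · rw [hlσ, ← List.map_take]
            exact List.mem_map.mpr ⟨v, hvtake, rfl⟩
          · rw [← hbv.1] at hadj2
            have := adj_indices hG m u huinj huadj (idx v) lσ[i] (by omega)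
              (by rw [hσi']; omega) hadj2
            omega
      have hGamMem := infseq_mem_Gam (m - 1) 1 le_rfl lσ hndl hmeml hcondl
      rw [hm1] at hGamMem
      refine ⟨lσ.reverse, hGamMem, ?_⟩
      rw [List.map_reverse, ← hσeq, hσ, List.reverse_reverse]
    · rintro ⟨l, hl, rfl⟩
      have hl' : l ∈ Gam (m - 1) 1 (1 + (m - 1)) := by rwa [hm1]
      obtain ⟨hlen, hndl, hmeml⟩ := Gam_spec (m - 1) 1 l hl'
      set r := l.reverse with hr
      have hrmem : ∀ x ∈ r, 1 ≤ x ∧ x ≤ m := by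
        intro x hx
        rw [hr, List.mem_reverse] at hx
        have := (hmeml x).1 hx
        rw [Finset.mem_Icc, hm1] at this
        exact this
      have hσeq : (List.map u l).reverse = r.map u := by
        rw [hr, List.map_reverse]
      rw [hσeq]
      refine ⟨?_, ?_, ?_⟩
      · refine List.Nodup.map_on ?_ (by rw [hr]; exact List.nodup_reverse.mpr hndl)
        intro x hx y hy hxy
        exact huinj x (by have := hrmem x hx; omega) y (by have := hrmem y hy; omega) hxy
      · intro v
        rw [hAS v]
        constructor
        · intro hv
          obtain ⟨k, hk, rfl⟩ := List.mem_map.mp hv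
          exact ⟨k, (hrmem k hk).1, (hrmem k hk).2, rfl⟩
        · rintro ⟨k, h1, h2, rfl⟩
          refine List.mem_map.mpr ⟨k, ?_, rfl⟩
          rw [hr, List.mem_reverse]
          exact (hmeml k).2 (by rw [Finset.mem_Icc, hm1]; omega)
      · intro i hi
        have hilen : i < r.length := by
          rw [List.length_map] at hi
          exact hi
        have hkey : ∃ k, (r.map u)[i] = u k ∧ 1 ≤ k ∧ k ≤ m ∧ ∃ j,
            (j = 0 ∨ j = m + 1 ∨ j ∈ r.take i) ∧ (j + 1 = k ∨ k + 1 = j) := by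
          obtain ⟨j, hj1, hj2⟩ := Gam_infseq (m - 1) 1 le_rfl l hl' i hilen
          rw [hm1] at hj1
          refine ⟨r[i]'hilen, List.getElem_map _, (hrmem _ (List.getElem_mem _)).1,
            (hrmem _ (List.getElem_mem _)).2, j, ?_, hj2⟩
          rcases hj1 with h1 | h1 | h1
          · left; omega
          · right; left; omega
          · right; right; exact h1
        obtain ⟨k, hgetk, hk1, hk2, j, hj1, hj2⟩ := hkey
        rw [hgetk]
        refine ⟨u j, ?_, ?_⟩
        · rcases hj1 with rfl | rfl | hjt
          · left
            left
            rw [hu0]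
          · left
            right
            rw [Set.mem_singleton_iff, ← hum]
          · right
            rw [← List.map_take]
            exact List.mem_map.mpr ⟨j, hjt, rfl⟩
        · rcases hj2 with hj2 | hj2
          · rw [← hj2]
            exact huadj j (by omega)
          · rw [show j = k + 1 by omega]
            exact (huadj k (by omega)).symm
  -- now the sum
  have hq2' : ∀ i j, 1 ≤ i → i < j → j ≤ m →
      q i j = (∑ k ∈ Finset.Icc i j, w k)⁻¹ * (q (i + 1) j + q i (j - 1)) := by
    intro i j h1 h2 h3
    rw [hq2 i j h1 h2 h3]
    congr 1
    rw [segSize_eq_sum hG m u s₁ s₂ hu0 hum huinj huadj i j (by omega)]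
    push_cast
    rfl
  have hq1' : ∀ i, 1 ≤ i → i ≤ m → q i i = (w i)⁻¹ := fun i h1 h2 => hq1 i h1 h2
  have hmain := gam_sum w q m hq1' hq2' (m - 1) 1 le_rfl (by omega)
  rw [hm1] at hmain
  rw [hset, finsum_mem_coe_finset, Finset.sum_image ?hinj]
  case hinj =>
    intro l1 hl1 l2 hl2 he
    have hsp1 := Gam_spec (m - 1) 1 l1 (by rwa [hm1])
    have hsp2 := Gam_spec (m - 1) 1 l2 (by rwa [hm1])
    have e1 : l1 = (List.map u l1).map idx := by
      rw [List.map_map]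
      symm
      calc l1.map (idx ∘ u) = l1.map id := List.map_congr_left (fun x hx => by
            have := (hsp1.2.2 x).1 hx
            rw [Finset.mem_Icc, hm1] at this
            exact hidx x (by omega))
        _ = l1 := l1.map_id
    have e2 : l2 = (List.map u l2).map idx := by
      rw [List.map_map]
      symm
      calc l2.map (idx ∘ u) = l2.map id := List.map_congr_left (fun x hx => by
            have := (hsp2.2.2 x).1 hx
            rw [Finset.mem_Icc, hm1] at this
            exact hidx x (by omega))
        _ = l2 := l2.map_id
    rw [e1, e2, he]
  rw [hmain]
  apply Finset.sum_congr rfl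
  intro l hl
  have hm2 : m - 1 + 1 = m := by omega
  rw [hm2]
  apply Finset.prod_congr rfl
  intro i _
  congr 1
  rw [Ifun, ← List.map_take, List.map_map]
  rw [show ((fun v => (pairSubtree G s₁ s₂ v).ncard) ∘ u) = wN from rfl]
  rw [Nat.cast_list_sum, List.map_map]
  rfl
end

section
/- In the setting of a path of m interior vertices between two sources where the last r > ⌈m/2⌉ vertices closest to one source are assigned color i and the rest color j (a coloring/partition of the path): the number of infection orderings of the path consistent with a split where the first r positions (from source i's side) have color i equals C(m, r) times the fixed per-ordering probability factor; hence the coloring with r = ⌈m/2⌉ maximizes the count of consistent infection sequences over all contiguous colorings, since C(m, ⌈m/2⌉) ≥ C(m, r) for all r. Consequently the Voronoi (balanced) split of each source-to-source path maximizes the partition posterior P(A_n | S, G_n). -/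
/-- The interior vertices of the path colored from source `s₁`'s side (indices
`1, …, r`), listed in increasing order (the required infection order within
that color class). -/
def leftList (m r : ℕ) : List (Fin (m + 2)) :=
  (List.finRange (m + 2)).filter (fun v => decide (1 ≤ v.val ∧ v.val ≤ r))

/-- The interior vertices colored from source `s₂`'s side (indices `r+1, …, m`),
listed in decreasing order. -/
def rightList (m r : ℕ) : List (Fin (m + 2)) :=
  ((List.finRange (m + 2)).filter (fun v => decide (r + 1 ≤ v.val ∧ v.val ≤ m))).reverse

/-- The number of infection sequences of the path from its two endpoints that are
consistent with the contiguous coloring in which the `r` vertices nearest `s₁` are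
colored `i` (i.e. each color class is infected in order from its source). -/
noncomputable def pathColoringCount (m r : ℕ) : ℕ :=
  Set.ncard {σ : List (Fin (m + 2)) |
    IsInfSeqOn (SimpleGraph.pathGraph (m + 2)) Set.univ {0, Fin.last (m + 1)} σ ∧
    σ.filter (fun v => decide (v.val ≤ r)) = leftList m r ∧
    σ.filter (fun v => decide (r < v.val)) = rightList m r}

/-! ### Auxiliary development -/

open Fin.NatCast


/-- All merges (interleavings) of two lists. -/
def merges {α : Type*} : List α → List α → List (List α)
  | [], r => [r]
  | a :: l, [] => [a :: l]
  | a :: l, b :: r =>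
      (merges l (b :: r)).map (a :: ·) ++ (merges (a :: l) r).map (b :: ·)

theorem merges_nil_left {α : Type*} (r : List α) : merges [] r = [r] := by
  simp [merges]

theorem merges_nil_right {α : Type*} (l : List α) : merges l [] = [l] := by
  cases l <;> simp [merges]

theorem merges_cons_cons {α : Type*} (a b : α) (l r : List α) :
    merges (a :: l) (b :: r) =
      (merges l (b :: r)).map (a :: ·) ++ (merges (a :: l) r).map (b :: ·) := by
  simp [merges]

theorem length_merges {α : Type*} : ∀ (l r : List α),
    (merges l r).length = (l.length + r.length).choose l.length
  | [], r => by simp [merges_nil_left]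
  | a :: l, [] => by simp [merges_nil_right]
  | a :: l, b :: r => by
      rw [merges_cons_cons]
      simp only [List.length_append, List.length_map]
      rw [length_merges l (b :: r), length_merges (a :: l) r]
      simp only [List.length_cons]
      rw [show l.length + (r.length + 1) = (l.length + r.length) + 1 by omega,
        show l.length + 1 + r.length = (l.length + r.length) + 1 by omega,
        show l.length + 1 + (r.length + 1) = (l.length + r.length) + 1 + 1 by omega]
      exact (Nat.choose_succ_succ _ _).symm
termination_by l r => l.length + r.length

theorem nodup_merges {α : Type*} : ∀ (l r : List α), l.Disjoint r →
    (merges l r).Nodup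
  | [], r => fun _ => by simp [merges_nil_left]
  | a :: l, [] => fun _ => by simp [merges_nil_right]
  | a :: l, b :: r => fun hd => by
      rw [merges_cons_cons]
      have hab : a ≠ b := fun h =>
        hd (List.mem_cons_self (a := a) (l := l)) (h ▸ List.mem_cons_self (a := b) (l := r))
      rw [List.nodup_append]
      refine ⟨?_, ?_, ?_⟩
      · exact (nodup_merges l (b :: r) (fun x hx hx' => hd (List.mem_cons_of_mem _ hx) hx')).map
          (fun x y h => by injection h)
      · exact (nodup_merges (a :: l) r (fun x hx hx' => hd hx (List.mem_cons_of_mem _ hx'))).map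
          (fun x y h => by injection h)
      · intro x hx y hy hxy
        obtain ⟨x', _, rfl⟩ := List.mem_map.mp hx
        obtain ⟨y', _, rfl⟩ := List.mem_map.mp hy
        exact hab (by injection hxy)
termination_by l r => l.length + r.length

theorem mem_merges_iff {α : Type*} (p : α → Bool) :
    ∀ (σ l r : List α), (∀ x ∈ l, p x = true) → (∀ x ∈ r, p x = false) →
    (σ ∈ merges l r ↔ σ.filter p = l ∧ σ.filter (fun x => !p x) = r)
  | [], l, r => fun _ _ => by
      constructor
      · intro h
        match l, r with
        | [], r => rw [merges_nil_left] at h; simp_all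
        | a :: l, [] => rw [merges_nil_right] at h; simp_all
        | a :: l, b :: r =>
          rw [merges_cons_cons] at h
          rcases List.mem_append.mp h with h | h <;>
            · obtain ⟨x, _, hx⟩ := List.mem_map.mp h
              exact absurd hx (by simp)
      · rintro ⟨h1, h2⟩
        simp only [List.filter_nil] at h1 h2
        subst h1; subst h2
        simp [merges_nil_left]
  | x :: t, l, r => fun hl hr => by
      match l, r with
      | [], [] =>
        rw [merges_nil_left]
        simp only [List.mem_singleton]
        constructor
        · intro h; exact absurd h (List.cons_ne_nil x t)
        · rintro ⟨h1, h2⟩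
          by_cases hp : p x = true
          · simp [List.filter_cons, hp] at h1
          · simp [List.filter_cons, hp] at h2
      | [], b :: r =>
        rw [merges_nil_left]
        simp only [List.mem_singleton]
        constructor
        · intro h
          have hall : ∀ y ∈ x :: t, p y = false := h ▸ hr
          constructor
          · rw [List.filter_eq_nil_iff]
            intro y hy
            simp [hall y hy]
          · rw [List.filter_eq_self.mpr (fun y hy => by simp [hall y hy])]
            exact h
        · rintro ⟨h1, h2⟩
          have hall : ∀ y ∈ x :: t, p y = false := by
            intro y hy
            by_contra hc
            have hpy : p y = true := by revert hc; cases p y <;> simp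
            have : y ∈ List.filter p (x :: t) := List.mem_filter.mpr ⟨hy, hpy⟩
            rw [h1] at this; exact absurd this List.not_mem_nil
          rw [← h2, List.filter_eq_self.mpr (fun y hy => by simp [hall y hy])]
      | a :: l, [] =>
        rw [merges_nil_right]
        simp only [List.mem_singleton]
        constructor
        · intro h
          have hall : ∀ y ∈ x :: t, p y = true := h ▸ hl
          constructor
          · rw [List.filter_eq_self.mpr hall]; exact h
          · rw [List.filter_eq_nil_iff]
            intro y hy
            simp [hall y hy]
        · rintro ⟨h1, h2⟩
          have hall : ∀ y ∈ x :: t, p y = true := by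
            intro y hy
            by_contra hc
            have hpy : (!p y) = true := by revert hc; cases p y <;> simp
            have : y ∈ List.filter (fun x => !p x) (x :: t) := List.mem_filter.mpr ⟨hy, hpy⟩
            rw [h2] at this; exact absurd this List.not_mem_nil
          rw [← h1, List.filter_eq_self.mpr hall]
      | a :: l, b :: r =>
        have hpa : p a = true := hl a (by simp)
        have hpb : p b = false := hr b (by simp)
        rw [merges_cons_cons]
        rw [List.mem_append, List.mem_map, List.mem_map]
        constructor
        · rintro (⟨t', ht', he⟩ | ⟨t', ht', he⟩)
          · cases he
            have := (mem_merges_iff p t l (b :: r)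
              (fun y hy => hl y (List.mem_cons_of_mem _ hy)) hr).mp ht'
            simp [List.filter_cons, hpa, this.1, this.2]
          · cases he
            have := (mem_merges_iff p t (a :: l) r hl
              (fun y hy => hr y (List.mem_cons_of_mem _ hy))).mp ht'
            simp [List.filter_cons, hpb, this.1, this.2]
        · rintro ⟨h1, h2⟩
          by_cases hp : p x = true
          · left
            have hxa : x = a ∧ t.filter p = l := by
              rw [List.filter_cons, if_pos hp] at h1
              exact ⟨by injection h1, by injection h1⟩
            have ht2 : t.filter (fun x => !p x) = b :: r := by
              rwa [List.filter_cons, if_neg (by simp [hp])] at h2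
            exact ⟨t, (mem_merges_iff p t l (b :: r)
              (fun y hy => hl y (List.mem_cons_of_mem _ hy)) hr).mpr ⟨hxa.2, ht2⟩,
              by rw [hxa.1]⟩
          · right
            have hp' : p x = false := by revert hp; cases p x <;> simp
            have hxb : x = b ∧ t.filter (fun x => !p x) = r := by
              rw [List.filter_cons, if_pos (by simp [hp'])] at h2
              exact ⟨by injection h2, by injection h2⟩
            have ht1 : t.filter p = a :: l := by
              rwa [List.filter_cons, if_neg (by simp [hp'])] at h1
            exact ⟨t, (mem_merges_iff p t (a :: l) r hl
              (fun y hy => hr y (List.mem_cons_of_mem _ hy))).mpr ⟨ht1, hxb.2⟩,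
              by rw [hxb.1]⟩
termination_by σ _ _ => σ.length

theorem perm_of_mem_merges {α : Type*} : ∀ {σ l r : List α}, σ ∈ merges l r → σ.Perm (l ++ r)
  | σ, [], r => fun h => by rw [merges_nil_left] at h; simp_all
  | σ, a :: l, [] => fun h => by rw [merges_nil_right] at h; simp_all
  | σ, a :: l, b :: r => fun h => by
      rw [merges_cons_cons, List.mem_append, List.mem_map, List.mem_map] at h
      rcases h with ⟨t, ht, rfl⟩ | ⟨t, ht, rfl⟩
      · exact (perm_of_mem_merges ht).cons a
      · exact ((perm_of_mem_merges ht).cons b).trans List.perm_middle.symm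
termination_by σ l r => l.length + r.length

/-- Ascending run `a, a+1, …, a+k-1` inside `Fin (m+2)`. -/
def ascL (m a k : ℕ) : List (Fin (m + 2)) :=
  (List.range k).map (fun j => ((a + j : ℕ) : Fin (m + 2)))

/-- Descending run `a+k-1, …, a+1, a` inside `Fin (m+2)`. -/
def descL (m a k : ℕ) : List (Fin (m + 2)) := (ascL m a k).reverse

theorem ascL_zero (m a : ℕ) : ascL m a 0 = [] := rfl

theorem descL_zero (m a : ℕ) : descL m a 0 = [] := rfl

theorem ascL_succ_left (m a k : ℕ) :
    ascL m a (k + 1) = ((a : ℕ) : Fin (m + 2)) :: ascL m (a + 1) k := by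
  unfold ascL
  rw [List.range_succ_eq_map, List.map_cons, List.map_map]
  refine congrArg₂ List.cons (by norm_num) ?_
  apply List.map_congr_left
  intro j _
  simp only [Function.comp, Nat.succ_eq_add_one]
  congr 1
  omega

theorem descL_succ (m a k : ℕ) :
    descL m a (k + 1) = ((a + k : ℕ) : Fin (m + 2)) :: descL m a k := by
  unfold descL ascL
  rw [List.range_succ, List.map_append, List.reverse_append]
  simp

theorem length_ascL (m a k : ℕ) : (ascL m a k).length = k := by simp [ascL]

theorem length_descL (m a k : ℕ) : (descL m a k).length = k := by simp [descL, length_ascL]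

theorem mem_ascL {m a k : ℕ} (hk : a + k ≤ m + 2) (v : Fin (m + 2)) :
    v ∈ ascL m a k ↔ a ≤ v.val ∧ v.val < a + k := by
  simp only [ascL, List.mem_map, List.mem_range]
  constructor
  · rintro ⟨j, hj, rfl⟩
    rw [Fin.val_cast_of_lt (by omega)]
    omega
  · rintro ⟨h1, h2⟩
    refine ⟨v.val - a, by omega, ?_⟩
    have : a + (v.val - a) = v.val := by omega
    rw [this]
    exact (Fin.cast_val_eq_self v)

theorem mem_descL {m a k : ℕ} (hk : a + k ≤ m + 2) (v : Fin (m + 2)) :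
    v ∈ descL m a k ↔ a ≤ v.val ∧ v.val < a + k := by
  rw [descL, List.mem_reverse, mem_ascL hk]

theorem pairwise_ascL {m a k : ℕ} (hk : a + k ≤ m + 2) :
    (ascL m a k).Pairwise (· < ·) := by
  unfold ascL
  rw [List.pairwise_map]
  refine (List.pairwise_lt_range (n := k)).imp_of_mem ?_
  intro i j hi hj hij
  rw [List.mem_range] at hi hj
  show (((a + i : ℕ) : Fin (m + 2)) : Fin (m + 2)).val < (((a + j : ℕ) : Fin (m + 2)) : Fin (m + 2)).val
  rw [Fin.val_cast_of_lt (by omega), Fin.val_cast_of_lt (by omega)]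
  omega

theorem nodup_ascL {m a k : ℕ} (hk : a + k ≤ m + 2) : (ascL m a k).Nodup := by
  simp only [ascL, List.nodup_map_iff_inj_on (List.nodup_range (n := k))]
  intro i hi j hj hij
  rw [List.mem_range] at hi hj
  have := congrArg Fin.val hij
  rw [Fin.val_cast_of_lt (by omega), Fin.val_cast_of_lt (by omega)] at this
  omega

theorem nodup_descL {m a k : ℕ} (hk : a + k ≤ m + 2) : (descL m a k).Nodup := by
  rw [descL, List.nodup_reverse]; exact nodup_ascL hk

theorem leftList_eq (m r : ℕ) (hr : r ≤ m) : leftList m r = ascL m 1 r := by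
  have h1 : (leftList m r).Pairwise (· < ·) :=
    (List.pairwise_lt_finRange (m + 2)).filter _
  have h2 : (ascL m 1 r).Pairwise (· < ·) := pairwise_ascL (by omega)
  refine List.Perm.eq_of_pairwise (fun _ _ _ _ hab hba => absurd (hab.trans hba) (lt_irrefl _)) h1 h2 ?_
  refine (List.perm_ext_iff_of_nodup ((List.nodup_finRange _).filter _)
    (nodup_ascL (by omega))).mpr ?_
  intro v
  rw [mem_ascL (by omega)]
  simp [leftList, List.mem_filter]
  omega

theorem rightList_eq (m r : ℕ) (hr : r ≤ m) : rightList m r = descL m (r + 1) (m - r) := by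
  unfold rightList descL
  congr 1
  have h1 : ((List.finRange (m + 2)).filter
      (fun v => decide (r + 1 ≤ v.val ∧ v.val ≤ m))).Pairwise (· < ·) :=
    (List.pairwise_lt_finRange (m + 2)).filter _
  have h2 : (ascL m (r + 1) (m - r)).Pairwise (· < ·) := pairwise_ascL (by omega)
  refine List.Perm.eq_of_pairwise (fun _ _ _ _ hab hba => absurd (hab.trans hba) (lt_irrefl _)) h1 h2 ?_
  refine (List.perm_ext_iff_of_nodup ((List.nodup_finRange _).filter _)
    (nodup_ascL (by omega))).mpr ?_
  intro v
  rw [mem_ascL (by omega)]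
  simp [List.mem_filter]
  omega

/-- Validity of an infection sequence given already-infected set `P`. -/
def IsInfFrom {V : Type*} (G : SimpleGraph V) (P : Set V) (σ : List V) : Prop :=
  ∀ i (h : i < σ.length), ∃ u, (u ∈ P ∨ u ∈ σ.take i) ∧ G.Adj u σ[i]

theorem isInfFrom_nil {V : Type*} (G : SimpleGraph V) (P : Set V) :
    IsInfFrom G P [] := fun i h => by simp at h

theorem isInfFrom_cons {V : Type*} {G : SimpleGraph V} {P : Set V} {c : V} {t : List V}
    (h1 : ∃ u ∈ P, G.Adj u c) (h2 : IsInfFrom G (insert c P) t) :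
    IsInfFrom G P (c :: t) := by
  intro i hi
  match i with
  | 0 =>
    obtain ⟨u, hu, hadj⟩ := h1
    exact ⟨u, Or.inl hu, by simpa using hadj⟩
  | i + 1 =>
    have hi' : i < t.length := by simpa using hi
    obtain ⟨u, hu, hadj⟩ := h2 i hi'
    refine ⟨u, ?_, by simpa using hadj⟩
    rcases hu with hu | hu
    · rcases Set.mem_insert_iff.mp hu with rfl | hu
      · exact Or.inr (by simp [List.take_succ_cons])
      · exact Or.inl hu
    · exact Or.inr (by simp [List.take_succ_cons, hu])

theorem pathGraph_adj_cast {m x : ℕ} (hx : x + 1 ≤ m + 1) :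
    (SimpleGraph.pathGraph (m + 2)).Adj ((x : ℕ) : Fin (m + 2)) ((x + 1 : ℕ) : Fin (m + 2)) := by
  rw [SimpleGraph.pathGraph_adj]
  left
  rw [Fin.val_cast_of_lt (by omega), Fin.val_cast_of_lt (by omega)]

theorem isInfFrom_merges (m : ℕ) : ∀ (k j a b : ℕ) (P : Set (Fin (m + 2)))
    (σ : List (Fin (m + 2))), σ ∈ merges (ascL m a k) (descL m b j) →
    1 ≤ a → a + k ≤ m + 1 → 1 ≤ b → b + j ≤ m + 1 →
    ((a - 1 : ℕ) : Fin (m + 2)) ∈ P → ((b + j : ℕ) : Fin (m + 2)) ∈ P →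
    IsInfFrom (SimpleGraph.pathGraph (m + 2)) P σ
  | 0, 0, a, b, P, σ => fun hσ _ _ _ _ _ _ => by
      rw [ascL_zero, descL_zero, merges_nil_left] at hσ
      simp only [List.mem_singleton] at hσ
      subst hσ
      exact isInfFrom_nil _ _
  | 0, j + 1, a, b, P, σ => fun hσ ha hak hb hbj hPa hPb => by
      rw [ascL_zero, merges_nil_left] at hσ
      simp only [List.mem_singleton] at hσ
      subst hσ
      rw [descL_succ]
      refine isInfFrom_cons ⟨((b + j + 1 : ℕ) : Fin (m + 2)), ?_, ?_⟩ ?_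
      · rw [show b + j + 1 = b + (j + 1) by omega]; exact hPb
      · exact (pathGraph_adj_cast (by omega)).symm
      · refine isInfFrom_merges m 0 j a b _ _ ?_ ha hak hb (by omega) ?_ ?_
        · rw [ascL_zero, merges_nil_left]; simp
        · exact Set.mem_insert_iff.mpr (Or.inr hPa)
        · exact Set.mem_insert_iff.mpr (Or.inl rfl)
  | k + 1, 0, a, b, P, σ => fun hσ ha hak hb hbj hPa hPb => by
      rw [descL_zero, merges_nil_right] at hσ
      simp only [List.mem_singleton] at hσ
      subst hσ
      rw [ascL_succ_left]
      refine isInfFrom_cons ⟨((a - 1 : ℕ) : Fin (m + 2)), hPa, ?_⟩ ?_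
      · have : (SimpleGraph.pathGraph (m + 2)).Adj ((a - 1 : ℕ) : Fin (m + 2))
            ((a - 1 + 1 : ℕ) : Fin (m + 2)) := pathGraph_adj_cast (by omega)
        rwa [show a - 1 + 1 = a by omega] at this
      · refine isInfFrom_merges m k 0 (a + 1) b _ _ ?_ (by omega) (by omega) hb (by omega) ?_ ?_
        · rw [descL_zero, merges_nil_right]; simp
        · rw [show a + 1 - 1 = a by omega]
          exact Set.mem_insert_iff.mpr (Or.inl rfl)
        · exact Set.mem_insert_iff.mpr (Or.inr hPb)
  | k + 1, j + 1, a, b, P, σ => fun hσ ha hak hb hbj hPa hPb => by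
      rw [ascL_succ_left, descL_succ, merges_cons_cons, List.mem_append,
        List.mem_map, List.mem_map] at hσ
      rcases hσ with ⟨t, ht, rfl⟩ | ⟨t, ht, rfl⟩
      · refine isInfFrom_cons ⟨((a - 1 : ℕ) : Fin (m + 2)), hPa, ?_⟩ ?_
        · have : (SimpleGraph.pathGraph (m + 2)).Adj ((a - 1 : ℕ) : Fin (m + 2))
              ((a - 1 + 1 : ℕ) : Fin (m + 2)) := pathGraph_adj_cast (by omega)
          rwa [show a - 1 + 1 = a by omega] at this
        · refine isInfFrom_merges m k (j + 1) (a + 1) b _ _ ?_ (by omega) (by omega) hb hbj ?_ ?_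
          · rw [descL_succ]; exact ht
          · rw [show a + 1 - 1 = a by omega]
            exact Set.mem_insert_iff.mpr (Or.inl rfl)
          · exact Set.mem_insert_iff.mpr (Or.inr hPb)
      · refine isInfFrom_cons ⟨((b + j + 1 : ℕ) : Fin (m + 2)), ?_, ?_⟩ ?_
        · rw [show b + j + 1 = b + (j + 1) by omega]; exact hPb
        · exact (pathGraph_adj_cast (by omega)).symm
        · refine isInfFrom_merges m (k + 1) j a b _ _ ?_ ha hak hb (by omega) ?_ ?_
          · rw [ascL_succ_left]; exact ht
          · exact Set.mem_insert_iff.mpr (Or.inr hPa)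
          · exact Set.mem_insert_iff.mpr (Or.inl rfl)
termination_by k j => k + j

theorem filter_lt_eq_filter_not {m r : ℕ} (σ : List (Fin (m + 2))) :
    σ.filter (fun v => decide (r < v.val)) =
      σ.filter (fun x => !(fun v : Fin (m + 2) => decide (v.val ≤ r)) x) := by
  apply List.filter_congr
  intro x _
  rcases le_or_gt x.val r with h | h
  · simp [h, Nat.not_lt.mpr h]
  · simp [h, Nat.not_le.mpr h]

theorem setEq (m r : ℕ) (hr : r ≤ m) :
    {σ : List (Fin (m + 2)) |
      IsInfSeqOn (SimpleGraph.pathGraph (m + 2)) Set.univ {0, Fin.last (m + 1)} σ ∧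
      σ.filter (fun v => decide (v.val ≤ r)) = leftList m r ∧
      σ.filter (fun v => decide (r < v.val)) = rightList m r} =
    {σ | σ ∈ merges (ascL m 1 r) (descL m (r + 1) (m - r))} := by
  have hLp : ∀ x ∈ ascL m 1 r, (fun v : Fin (m + 2) => decide (v.val ≤ r)) x = true := by
    intro x hx
    rw [mem_ascL (by omega)] at hx
    simpa using (by omega : x.val ≤ r)
  have hRp : ∀ x ∈ descL m (r + 1) (m - r),
      (fun v : Fin (m + 2) => decide (v.val ≤ r)) x = false := by
    intro x hx
    rw [mem_descL (by omega)] at hx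
    simpa using (by omega : ¬ x.val ≤ r)
  have key := fun σ => mem_merges_iff (fun v : Fin (m + 2) => decide (v.val ≤ r))
    σ (ascL m 1 r) (descL m (r + 1) (m - r)) hLp hRp
  have hdisj : (ascL m 1 r).Disjoint (descL m (r + 1) (m - r)) := by
    intro x hx hx'
    rw [mem_ascL (by omega)] at hx
    rw [mem_descL (by omega)] at hx'
    omega
  ext σ
  simp only [Set.mem_setOf_eq]
  constructor
  · rintro ⟨_, h1, h2⟩
    refine (key σ).mpr ⟨?_, ?_⟩
    · rw [h1, leftList_eq m r hr]
    · rw [← filter_lt_eq_filter_not, h2, rightList_eq m r hr]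
  · intro hσ
    obtain ⟨hf1, hf2⟩ := (key σ).mp hσ
    have hperm := perm_of_mem_merges hσ
    have hnodupLR : ((ascL m 1 r) ++ (descL m (r + 1) (m - r))).Nodup :=
      List.nodup_append.mpr ⟨nodup_ascL (by omega), nodup_descL (by omega), fun x hx y hy hxy => hdisj hx (hxy ▸ hy)⟩
    refine ⟨⟨hperm.nodup_iff.mpr hnodupLR, ?_, ?_⟩, ?_, ?_⟩
    · intro v
      rw [hperm.mem_iff, List.mem_append, mem_ascL (by omega), mem_descL (by omega)]
      have hv := v.isLt
      simp only [Set.mem_diff, Set.mem_univ, true_and, Set.mem_insert_iff,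
        Set.mem_singleton_iff, not_or]
      constructor
      · rintro (⟨h1, h2⟩ | ⟨h1, h2⟩) <;>
          exact ⟨fun h => by have := congrArg Fin.val h; simp only [Fin.val_zero, Fin.val_last] at this; omega,
            fun h => by have := congrArg Fin.val h; simp only [Fin.val_zero, Fin.val_last] at this; omega⟩
      · rintro ⟨h1, h2⟩
        have hv0 : v.val ≠ 0 := fun h => h1 (Fin.ext (by simpa using h))
        have hvl : v.val ≠ m + 1 := fun h => h2 (Fin.ext (by simpa using h))
        omega
    · have := isInfFrom_merges m r (m - r) 1 (r + 1)
        ({0, Fin.last (m + 1)} : Set (Fin (m + 2))) σ hσ (le_refl 1) (by omega)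
        (by omega) (by omega) ?_ ?_
      · exact this
      · simp
      · have : ((r + 1 + (m - r) : ℕ) : Fin (m + 2)) = Fin.last (m + 1) := by
          apply Fin.ext
          rw [Fin.val_cast_of_lt (by omega), Fin.val_last]
          omega
        rw [this]
        simp
    · rw [hf1, leftList_eq m r hr]
    · rw [filter_lt_eq_filter_not, hf2, rightList_eq m r hr]

/-- Theorem 1's counting core: for the path with `m` interior vertices, the number
of infection sequences consistent with the contiguous coloring having `r` vertices
of the first color equals `C(m, r)`; hence the balanced (Voronoi) split
`r = ⌈m/2⌉` maximizes the number of consistent infection sequences (and so the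
partition posterior, the per-sequence probability being coloring-independent). -/
theorem voronoi_split_maximizes (m : ℕ) (hm : 1 ≤ m) :
    (∀ r ≤ m, pathColoringCount m r = m.choose r) ∧
    (∀ r ≤ m, pathColoringCount m r ≤ pathColoringCount m ((m + 1) / 2)) := by
  have count : ∀ r ≤ m, pathColoringCount m r = m.choose r := by
    intro r hr
    have hdisj : (ascL m 1 r).Disjoint (descL m (r + 1) (m - r)) := by
      intro x hx hx'
      rw [mem_ascL (by omega)] at hx
      rw [mem_descL (by omega)] at hx'
      omega
    rw [pathColoringCount, setEq m r hr]
    have h1 : {σ | σ ∈ merges (ascL m 1 r) (descL m (r + 1) (m - r))} =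
        (↑(merges (ascL m 1 r) (descL m (r + 1) (m - r))).toFinset :
          Set (List (Fin (m + 2)))) := by
      ext σ; simp
    rw [h1, Set.ncard_coe_finset, List.toFinset_card_of_nodup (nodup_merges _ _ hdisj),
      length_merges, length_ascL, length_descL]
    congr 1
    omega
  refine ⟨count, fun r hr => ?_⟩
  have h2 : (m + 1) / 2 ≤ m := by omega
  rw [count r hr, count _ h2]
  have h3 : m.choose ((m + 1) / 2) = m.choose (m / 2) := by
    rw [show (m + 1) / 2 = m - m / 2 by omega, Nat.choose_symm (Nat.div_le_self m 2)]
  rw [h3]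
  exact Nat.choose_le_middle r m
end

section
/- Let T be a finite tree on n ≥ 2 vertices with distinct vertices s_1, s_2 at distance 1 (adjacent). Then the number of infection sequences from {s_1, s_2} is C(s_1,s_2;T) = (n−2)! · ∏_{u ∈ T, u ∉ {s_1,s_2}} |T_u(s_1,s_2)|^{-1}, i.e., the q-factor in the two-source formula equals 1 when the sources are adjacent. -/
open scoped Classical

namespace InfAux

variable {V : Type*}

/-- descendants of `u` relative to source set `S`. -/
def Desc (G : SimpleGraph V) (S : Set V) (u : V) : Set V :=
  {v | ∀ s ∈ S, ∀ p : G.Walk v s, u ∈ p.support}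

lemma self_mem_desc (G : SimpleGraph V) (S : Set V) (u : V) : u ∈ Desc G S u :=
  fun _ _ p => p.start_mem_support

lemma desc_subset_compl {G : SimpleGraph V} {S : Set V} {r : V} (hr : r ∉ S) :
    Desc G S r ⊆ Sᶜ := by
  intro v hv hvS
  have : r = v := by simpa using hv v hvS SimpleGraph.Walk.nil
  exact hr (this ▸ hvS)

/-- the unique path in a tree. -/
noncomputable def tpath {G : SimpleGraph V} (hG : G.IsTree) (v w : V) : G.Walk v w :=
  (hG.existsUnique_path v w).exists.choose

lemma tpath_isPath {G : SimpleGraph V} (hG : G.IsTree) (v w : V) : (tpath hG v w).IsPath :=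
  (hG.existsUnique_path v w).exists.choose_spec

lemma eq_tpath {G : SimpleGraph V} (hG : G.IsTree) {v w : V} (p : G.Walk v w)
    (hp : p.IsPath) : p = tpath hG v w := by
  have h := hG.existsUnique_path v w
  exact h.unique hp (tpath_isPath hG v w)

lemma tpath_support_subset {G : SimpleGraph V} (hG : G.IsTree) {v w : V} (p : G.Walk v w) :
    (tpath hG v w).support ⊆ p.support := by
  rw [← eq_tpath hG p.bypass p.bypass_isPath]
  exact p.support_bypass_subset

lemma mem_desc_iff_tpath {G : SimpleGraph V} (hG : G.IsTree) {S : Set V} {u v : V} :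
    v ∈ Desc G S u ↔ ∀ s ∈ S, u ∈ (tpath hG v s).support := by
  constructor
  · intro h s hs; exact h s hs _
  · intro h s hs p; exact tpath_support_subset hG p (h s hs)

/-- L5 -/
lemma desc_insert_eq {G : SimpleGraph V} {S : Set V} {r a w : V} (hr : r ∉ S) (ha : a ∈ S)
    (hadj : G.Adj r a) (hwS : w ∉ S) (hwr : w ≠ r) :
    Desc G (insert r S) w = Desc G S w := by
  ext v
  constructor
  · intro h s hs p; exact h s (Set.mem_insert_iff.2 (Or.inr hs)) p
  · intro h s hs p
    rcases Set.mem_insert_iff.1 hs with hsr | hsS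
    · subst hsr
      have := h a ha (p.append (SimpleGraph.Walk.cons hadj SimpleGraph.Walk.nil))
      rw [SimpleGraph.Walk.support_append] at this
      rcases List.mem_append.1 this with h1 | h2
      · exact h1
      · simp at h2
        exact absurd (h2 ▸ ha) hwS
    · exact h s hsS p

/-- L6: along any walk from outside S into S there is a vertex outside S adjacent to S. -/
lemma exists_boundary {G : SimpleGraph V} {S : Set V} :
    ∀ {v s : V} (p : G.Walk v s), v ∉ S → s ∈ S →
      ∃ r ∈ p.support, r ∉ S ∧ ∃ a ∈ S, G.Adj r a := by
  intro v s p
  induction p with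
  | nil => intro hv hs; exact absurd hs hv
  | cons h q ih =>
    intro hv hs
    rename_i u w x
    by_cases hw : w ∈ S
    · exact ⟨u, by simp, hv, w, hw, h⟩
    · obtain ⟨r, hr, hrS, ha⟩ := ih hw hs
      exact ⟨r, by simp [hr], hrS, ha⟩


/-- L7: any vertex outside S on the tree-path from v to some s₀ ∈ S is an "ancestor" of v,
provided S is connected. -/
lemma mem_desc_of_mem_tpath {G : SimpleGraph V} (hG : G.IsTree) {S : Set V}
    (hconn : ∀ s ∈ S, ∀ s' ∈ S, ∃ W : G.Walk s s', ∀ x ∈ W.support, x ∈ S)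
    {v r s₀ : V} (hs₀ : s₀ ∈ S) (hrS : r ∉ S) (hr : r ∈ (tpath hG v s₀).support) :
    v ∈ Desc G S r := by
  rw [mem_desc_iff_tpath hG]
  intro s hs
  obtain ⟨W, hW⟩ := hconn s hs s₀ hs₀
  have hsub := tpath_support_subset hG ((tpath hG v s).append W)
  have := hsub hr
  rw [SimpleGraph.Walk.support_append] at this
  rcases List.mem_append.1 this with h1 | h2
  · exact h1
  · exact absurd (hW _ (List.mem_of_mem_tail h2)) hrS

/-- L8: in a tree, if the path v→b contains a and the path v→a contains b, then a = b. -/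
lemma eq_of_mem_tpath_mem_tpath {G : SimpleGraph V} (hG : G.IsTree) {v a b : V}
    (hab : a ∈ (tpath hG v b).support) (hba : b ∈ (tpath hG v a).support) : a = b := by
  set Q := tpath hG v b with hQ
  have hQp : Q.IsPath := tpath_isPath hG v b
  have htu : (Q.takeUntil a hab).IsPath := hQp.takeUntil hab
  have hRQ : tpath hG v a = Q.takeUntil a hab := (eq_tpath hG _ htu).symm
  have hbQ : b ∈ (Q.takeUntil a hab).support := hRQ ▸ hba
  have hsplit := Q.take_spec hab
  have hnodup : Q.support.Nodup := hQp.support_nodup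
  rw [← hsplit, SimpleGraph.Walk.support_append] at hnodup
  have hdisj := List.disjoint_of_nodup_append hnodup
  have hbend : b ∈ (Q.dropUntil a hab).support := SimpleGraph.Walk.end_mem_support _
  rw [SimpleGraph.Walk.support_eq_cons (Q.dropUntil a hab)] at hbend
  rcases List.mem_cons.1 hbend with h | h
  · exact h.symm
  · exact absurd h (fun hh => hdisj hbQ hh)

/-- L9: uniqueness of the root above v. -/
lemma root_unique {G : SimpleGraph V} (hG : G.IsTree) {S : Set V} {v r r' a a' : V}
    (hrS : r ∉ S) (hr'S : r' ∉ S) (ha : a ∈ S) (ha' : a' ∈ S)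
    (hadj : G.Adj r a) (hadj' : G.Adj r' a')
    (hv : v ∈ Desc G S r) (hv' : v ∈ Desc G S r') : r = r' := by
  have key : ∀ {x y c : V}, x ∉ S → c ∈ S → G.Adj y c → v ∈ Desc G S x →
      x ∈ (tpath hG v y).support := by
    intro x y c hxS hcS hyc hvd
    have := hvd c hcS ((tpath hG v y).append (SimpleGraph.Walk.cons hyc SimpleGraph.Walk.nil))
    rw [SimpleGraph.Walk.support_append] at this
    rcases List.mem_append.1 this with h1 | h2
    · exact h1
    · simp at h2
      exact absurd (h2 ▸ hcS) hxS
  have h1 : r ∈ (tpath hG v r').support := key hrS ha' hadj' hv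
  have h2 : r' ∈ (tpath hG v r).support := key hr'S ha hadj hv'
  exact eq_of_mem_tpath_mem_tpath hG h1 h2



lemma seq_decomp {G : SimpleGraph V} {S : Set V} (hne : ∃ v, v ∉ S) :
    {σ : List V | IsInfSeqOn G Set.univ S σ} =
      ⋃ r ∈ {r : V | r ∉ S ∧ ∃ a ∈ S, G.Adj a r},
        (List.cons r) '' {τ | IsInfSeqOn G Set.univ (insert r S) τ} := by
  ext σ
  simp only [Set.mem_setOf_eq, Set.mem_iUnion, Set.mem_image, exists_prop]
  constructor
  · rintro ⟨hnd, hmem, hinf⟩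
    obtain ⟨v, hv⟩ := hne
    have hvσ : v ∈ σ := (hmem v).2 ⟨Set.mem_univ v, hv⟩
    match σ, hnd, hmem, hinf with
    | r :: τ, hnd, hmem, hinf =>
    have hrmem : r ∈ Set.univ \ S := (hmem r).1 (List.mem_cons_self (a := r) (l := τ))
    have hrS : r ∉ S := hrmem.2
    have h0 := hinf 0 (by simp)
    simp only [List.take_zero, List.not_mem_nil, or_false, List.getElem_cons_zero] at h0
    refine ⟨r, ⟨hrS, h0⟩, τ, ⟨hnd.of_cons, ?_, ?_⟩, rfl⟩
    · intro w
      constructor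
      · intro hw
        have hws := (hmem w).1 (List.mem_cons_of_mem r hw)
        have hwr : w ≠ r := fun h => (List.nodup_cons.1 hnd).1 (h ▸ hw)
        exact ⟨Set.mem_univ w, fun h => (Set.mem_insert_iff.1 h).elim hwr (fun h2 => hws.2 h2)⟩
      · intro hw
        have hwr : w ≠ r := fun h => hw.2 (h ▸ Set.mem_insert r S)
        have : w ∈ r :: τ := (hmem w).2 ⟨Set.mem_univ w, fun h => hw.2 (Set.mem_insert_of_mem r h)⟩
        exact (List.mem_cons.1 this).resolve_left hwr
    · intro i hi
      obtain ⟨u, hu, hadj⟩ := hinf (i+1) (by simpa using Nat.succ_lt_succ hi)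
      refine ⟨u, ?_, by simpa using hadj⟩
      rcases hu with h | h
      · exact Or.inl (Set.mem_insert_of_mem r h)
      · rw [List.take_succ_cons] at h
        rcases List.mem_cons.1 h with h | h
        · exact Or.inl (h ▸ Set.mem_insert r S)
        · exact Or.inr h
  · rintro ⟨r, ⟨hrS, a, haS, hadj⟩, τ, ⟨hnd, hmem, hinf⟩, rfl⟩
    have hrτ : r ∉ τ := fun h => ((hmem r).1 h).2 (Set.mem_insert r S)
    refine ⟨List.nodup_cons.2 ⟨hrτ, hnd⟩, ?_, ?_⟩
    · intro w
      constructor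
      · intro hw
        rcases List.mem_cons.1 hw with h | h
        · exact ⟨Set.mem_univ w, h ▸ hrS⟩
        · exact ⟨Set.mem_univ w, fun hh => ((hmem w).1 h).2 (Set.mem_insert_of_mem r hh)⟩
      · intro hw
        by_cases hwr : w = r
        · exact hwr ▸ List.mem_cons_self (a := r) (l := τ)
        · exact List.mem_cons_of_mem r ((hmem w).2 ⟨Set.mem_univ w,
            fun hh => (Set.mem_insert_iff.1 hh).elim hwr hw.2⟩)
    · intro i hi
      match i with
      | 0 => exact ⟨a, Or.inl haS, by simpa using hadj⟩
      | j+1 =>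
        obtain ⟨u, hu, hadj'⟩ := hinf j (by simpa using Nat.lt_of_succ_lt_succ hi)
        refine ⟨u, ?_, by simpa using hadj'⟩
        rcases hu with h | h
        · rcases Set.mem_insert_iff.1 h with h | h
          · exact Or.inr (by rw [List.take_succ_cons]; exact h ▸ List.mem_cons_self (a := r))
          · exact Or.inl h
        · exact Or.inr (by rw [List.take_succ_cons]; exact List.mem_cons_of_mem r h)



lemma seq_finite [Fintype V] (G : SimpleGraph V) (A S : Set V) :
    {σ : List V | IsInfSeqOn G A S σ}.Finite := by
  apply Set.Finite.subset (List.finite_length_le V (Fintype.card V))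
  intro σ hσ
  exact hσ.1.length_le_card

lemma ncard_biUnion {α ι : Type*} (R : Finset ι) (f : ι → Set α) (hfin : ∀ i, (f i).Finite)
    (hdisj : ∀ i ∈ R, ∀ j ∈ R, i ≠ j → Disjoint (f i) (f j)) :
    (⋃ i ∈ R, f i).ncard = ∑ i ∈ R, (f i).ncard := by
  induction R using Finset.induction with
  | empty => simp
  | @insert a R ha ih =>
    rw [Finset.sum_insert ha]
    have hbU : (⋃ i ∈ R, f i) = ⋃ i ∈ (R : Set ι), f i := by simp
    rw [show (⋃ i ∈ (insert a R : Finset ι), f i) = f a ∪ ⋃ i ∈ R, f i by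
      simp only [Finset.mem_insert, Set.iUnion_iUnion_eq_or_left]]
    rw [Set.ncard_union_eq ?_ (hfin a) ?_, ih ?_]
    · intro i hi j hj hij
      exact hdisj i (Finset.mem_insert_of_mem hi) j (Finset.mem_insert_of_mem hj) hij
    · rw [Set.disjoint_iUnion₂_right]
      intro i hi
      exact hdisj a (Finset.mem_insert_self a R) i (Finset.mem_insert_of_mem hi)
        (fun h => ha (h ▸ hi))
    · exact Set.Finite.biUnion R.finite_toSet (fun i _ => hfin i)

lemma seq_univ (G : SimpleGraph V) {S : Set V} (hS : ∀ v, v ∈ S) :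
    {σ : List V | IsInfSeqOn G Set.univ S σ} = {([] : List V)} := by
  ext σ
  simp only [Set.mem_setOf_eq, Set.mem_singleton_iff]
  constructor
  · rintro ⟨-, hmem, -⟩
    refine List.eq_nil_iff_forall_not_mem.2 (fun v hv => ((hmem v).1 hv).2 (hS v))
  · rintro rfl
    exact ⟨List.nodup_nil, fun v => by simp [hS v], fun i h => by simp at h⟩


theorem key {V : Type*} [Fintype V] {G : SimpleGraph V} (hG : G.IsTree) :
    ∀ n (S : Finset V), Sᶜ.card = n →
      (∀ s ∈ S, ∀ s' ∈ S, ∃ W : G.Walk s s', ∀ x ∈ W.support, x ∈ S) →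
      S.Nonempty →
      ({σ : List V | IsInfSeqOn G Set.univ ↑S σ}.ncard : ℝ)
        = (Nat.factorial Sᶜ.card) * ∏ w ∈ Sᶜ, ((Desc G ↑S w).ncard : ℝ)⁻¹ := by
  intro n
  induction n with
  | zero =>
    intro S hcard _ _
    have hSu : Sᶜ = (∅ : Finset V) := Finset.card_eq_zero.1 hcard
    have hS : ∀ v, v ∈ (S : Set V) := by
      intro v
      by_contra hv
      have : v ∈ Sᶜ := Finset.mem_compl.2 (by simpa using hv)
      simp [hSu] at this
    rw [seq_univ G hS, hSu]
    simp
  | succ n ih =>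
    intro S hcard hconn hSne
    obtain ⟨s₀, hs₀⟩ := hSne
    classical
    set R : Finset V := Finset.univ.filter (fun r => r ∉ S ∧ ∃ a ∈ S, G.Adj a r) with hR
    have hScne : ∃ v, v ∉ (S : Set V) := by
      have : Sᶜ.Nonempty := Finset.card_pos.1 (by omega)
      obtain ⟨v, hv⟩ := this
      exact ⟨v, by simpa using Finset.mem_compl.1 hv⟩
    -- root properties
    have hRmem : ∀ r, r ∈ R ↔ (r ∉ S ∧ ∃ a ∈ S, G.Adj a r) := by
      intro r; simp [hR]
    -- partition of Sᶜ by Desc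
    have hdisj : ∀ r ∈ R, ∀ r' ∈ R, r ≠ r' → Disjoint (Desc G ↑S r) (Desc G ↑S r') := by
      intro r hr r' hr' hne
      obtain ⟨hrS, a, haS, hadj⟩ := (hRmem r).1 hr
      obtain ⟨hr'S, a', ha'S, hadj'⟩ := (hRmem r').1 hr'
      rw [Set.disjoint_left]
      intro v hv hv'
      exact hne (root_unique hG (by simpa using hrS) (by simpa using hr'S)
        (by simpa using haS) (by simpa using ha'S) hadj.symm hadj'.symm hv hv')
    have hcover : (⋃ r ∈ R, Desc G ↑S r) = (↑(Sᶜ) : Set V) := by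
      ext v
      simp only [Set.mem_iUnion, exists_prop, Finset.coe_compl, Set.mem_compl_iff,
        Finset.mem_coe]
      constructor
      · rintro ⟨r, hr, hv⟩
        have hrS := ((hRmem r).1 hr).1
        have := desc_subset_compl (G := G) (S := (↑S : Set V)) (by simpa using hrS) hv
        simpa using this
      · intro hv
        obtain ⟨r, hrsup, hrS, a, haS, hadj⟩ :=
          exists_boundary (S := (↑S : Set V)) (tpath hG v s₀) (by simpa using hv)
            (by simpa using hs₀)
        refine ⟨r, (hRmem r).2 ⟨by simpa using hrS, a, by simpa using haS, hadj.symm⟩, ?_⟩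
        exact mem_desc_of_mem_tpath hG
          (by intro s hs s' hs'
              obtain ⟨W, hW⟩ := hconn s (by simpa using hs) s' (by simpa using hs')
              exact ⟨W, fun x hx => by simpa using hW x hx⟩)
          (by simpa using hs₀) hrS hrsup
    have hsum : ∑ r ∈ R, (Desc G ↑S r).ncard = n + 1 := by
      rw [← ncard_biUnion R _ (fun r => Set.toFinite _) hdisj, hcover,
        Set.ncard_coe_finset, hcard]
    -- decomposition of the sequence set
    have hsetR : {r : V | r ∉ (S : Set V) ∧ ∃ a ∈ (S : Set V), G.Adj a r} = (↑R : Set V) := by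
      ext r; simp [hR]
    have hdec := seq_decomp (G := G) (S := (↑S : Set V)) hScne
    rw [hsetR] at hdec
    have hdec2 : {σ : List V | IsInfSeqOn G Set.univ ↑S σ}
        = ⋃ r ∈ R, (List.cons r) '' {τ | IsInfSeqOn G Set.univ (insert r ↑S) τ} := by
      rw [hdec]; simp
    have hinj : ∀ r : V, Function.Injective (List.cons r) := by
      intro r x y h; exact (List.cons.injEq r x r y ▸ h).2
    have hnc : {σ : List V | IsInfSeqOn G Set.univ ↑S σ}.ncard
        = ∑ r ∈ R, {τ : List V | IsInfSeqOn G Set.univ (insert r ↑S) τ}.ncard := by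
      rw [hdec2, ncard_biUnion R _ (fun r => (seq_finite G _ _).image _) ?_]
      · exact Finset.sum_congr rfl (fun r _ => Set.ncard_image_of_injective _ (hinj r))
      · intro r hr r' hr' hne
        rw [Set.disjoint_left]
        rintro x ⟨τ, -, rfl⟩ ⟨τ', -, hx⟩
        exact hne (List.cons.injEq _ _ _ _ ▸ hx).1.symm
    -- apply IH for each root
    have hterm : ∀ r ∈ R, ({τ : List V | IsInfSeqOn G Set.univ (insert r ↑S) τ}.ncard : ℝ)
        = (Nat.factorial n) * ∏ w ∈ Sᶜ.erase r, ((Desc G ↑S w).ncard : ℝ)⁻¹ := by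
      intro r hr
      obtain ⟨hrS, a, haS, hadj⟩ := (hRmem r).1 hr
      have hrc : r ∈ Sᶜ := Finset.mem_compl.2 hrS
      have hcompl : (insert r S)ᶜ = Sᶜ.erase r := by
        ext x; simp [Finset.mem_compl, not_or, and_comm]
      have hcard' : (insert r S)ᶜ.card = n := by
        rw [hcompl, Finset.card_erase_of_mem hrc, hcard]
        omega
      have hconn' : ∀ s ∈ insert r S, ∀ s' ∈ insert r S,
          ∃ W : G.Walk s s', ∀ x ∈ W.support, x ∈ insert r S := by
        have hwalk : ∀ s ∈ S, ∃ W : G.Walk r s, ∀ x ∈ W.support, x ∈ insert r S := by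
          intro s hs
          obtain ⟨W, hW⟩ := hconn a haS s hs
          refine ⟨SimpleGraph.Walk.cons hadj.symm W, ?_⟩
          intro x hx
          rcases List.mem_cons.1 (by simpa using hx) with h | h
          · exact h ▸ Finset.mem_insert_self r S
          · exact Finset.mem_insert_of_mem (hW x h)
        have hw2 : ∀ s ∈ insert r S, ∃ W : G.Walk r s, ∀ x ∈ W.support, x ∈ insert r S := by
          intro s hs
          rcases Finset.mem_insert.1 hs with h1 | h1
          · subst h1
            exact ⟨SimpleGraph.Walk.nil, by simp⟩
          · exact hwalk s h1
        intro s hs s' hs'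
        obtain ⟨W1, h1⟩ := hw2 s hs
        obtain ⟨W2, h2⟩ := hw2 s' hs'
        refine ⟨W1.reverse.append W2, ?_⟩
        intro x hx
        rw [SimpleGraph.Walk.mem_support_append_iff] at hx
        rcases hx with h | h
        · exact h1 x (by simpa using h)
        · exact h2 x h
      have := ih (insert r S) hcard' hconn' ⟨r, Finset.mem_insert_self r S⟩
      rw [hcard'] at this
      rw [show ((insert r S : Finset V) : Set V) = insert r (↑S : Set V) by simp] at this
      rw [this, hcompl]
      congr 1
      refine Finset.prod_congr rfl (fun w hw => ?_)
      have hwr : w ≠ r := (Finset.mem_erase.1 hw).1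
      have hwS : w ∉ S := Finset.mem_compl.1 (Finset.mem_erase.1 hw).2
      rw [desc_insert_eq (by simpa using hrS) (by simpa using haS) hadj.symm
        (by simpa using hwS) hwr]
    -- put it together
    have hpos : ∀ w, ((Desc G ↑S w).ncard : ℝ) ≠ 0 := by
      intro w
      have : 0 < (Desc G ↑S w).ncard :=
        (Set.ncard_pos (Set.toFinite _)).2 ⟨w, self_mem_desc G ↑S w⟩
      positivity
    calc ({σ : List V | IsInfSeqOn G Set.univ ↑S σ}.ncard : ℝ)
        = ∑ r ∈ R, ({τ : List V | IsInfSeqOn G Set.univ (insert r ↑S) τ}.ncard : ℝ) := by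
          rw [hnc]; push_cast; ring
      _ = ∑ r ∈ R, (Nat.factorial n) * ∏ w ∈ Sᶜ.erase r, ((Desc G ↑S w).ncard : ℝ)⁻¹ :=
          Finset.sum_congr rfl hterm
      _ = (Nat.factorial n) * ∑ r ∈ R, ((Desc G ↑S r).ncard : ℝ) *
            ∏ w ∈ Sᶜ, ((Desc G ↑S w).ncard : ℝ)⁻¹ := by
          rw [Finset.mul_sum]
          refine Finset.sum_congr rfl (fun r hr => ?_)
          congr 1
          have hrc : r ∈ Sᶜ := Finset.mem_compl.2 ((hRmem r).1 hr).1
          rw [← Finset.mul_prod_erase Sᶜ (fun w => ((Desc G ↑S w).ncard : ℝ)⁻¹) hrc,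
            ← mul_assoc, mul_inv_cancel₀ (hpos r), one_mul]
      _ = (Nat.factorial (n+1)) * ∏ w ∈ Sᶜ, ((Desc G ↑S w).ncard : ℝ)⁻¹ := by
          rw [← Finset.sum_mul, ← Nat.cast_sum, hsum]
          rw [Nat.factorial_succ]
          push_cast
          ring
      _ = (Nat.factorial Sᶜ.card) * ∏ w ∈ Sᶜ, ((Desc G ↑S w).ncard : ℝ)⁻¹ := by rw [hcard]

end InfAux

/-- For two adjacent sources `s₁ ∼ s₂` in a tree on `n ≥ 2` vertices, the two-source
infection sequence count is
`C(s₁,s₂;T) = (n−2)! ∏_{u ∉ {s₁,s₂}} |T_u(s₁,s₂)|⁻¹` (the `q`-factor equals 1). -/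
theorem adjacent_two_source_count {V : Type*} [Fintype V] (G : SimpleGraph V)
    (hG : G.IsTree) (s₁ s₂ : V) (hadj : G.Adj s₁ s₂) (hn : 2 ≤ Fintype.card V) :
    (Set.ncard {σ : List V | IsInfSeqOn G Set.univ {s₁, s₂} σ} : ℝ)
      = (Nat.factorial (Fintype.card V - 2) : ℝ) *
        ∏ w ∈ Finset.univ.filter (fun w => w ∉ ({s₁, s₂} : Set V)),
          ((pairSubtree G s₁ s₂ w).ncard : ℝ)⁻¹ := by
  classical
  have hne12 : s₁ ≠ s₂ := hadj.ne
  set S : Finset V := {s₁, s₂} with hS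
  have hcoe : (↑S : Set V) = {s₁, s₂} := by simp [hS]
  have hconn : ∀ s ∈ S, ∀ s' ∈ S, ∃ W : G.Walk s s', ∀ x ∈ W.support, x ∈ S := by
    have hw2 : ∀ s ∈ S, ∃ W : G.Walk s₁ s, ∀ x ∈ W.support, x ∈ S := by
      intro s hs
      rcases Finset.mem_insert.1 hs with h | h
      · subst h; exact ⟨SimpleGraph.Walk.nil, by simp [hS]⟩
      · have h2 : s = s₂ := by simpa using h
        refine ⟨(SimpleGraph.Walk.cons hadj SimpleGraph.Walk.nil).copy rfl h2.symm, ?_⟩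
        intro x hx
        rw [SimpleGraph.Walk.support_copy] at hx
        have hx2 : x = s₁ ∨ x = s₂ := by simpa using hx
        rcases hx2 with hxx | hxx <;> simp [hS, h2, hxx]
    intro s hs s' hs'
    obtain ⟨W1, h1⟩ := hw2 s hs
    obtain ⟨W2, h2⟩ := hw2 s' hs'
    refine ⟨W1.reverse.append W2, ?_⟩
    intro x hx
    rw [SimpleGraph.Walk.mem_support_append_iff] at hx
    rcases hx with h | h
    · exact h1 x (by simpa using h)
    · exact h2 x h
  have hkey := InfAux.key hG Sᶜ.card S rfl hconn ⟨s₁, by simp [hS]⟩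
  rw [hcoe] at hkey
  have hcard2 : S.card = 2 := by
    rw [hS, Finset.card_insert_of_notMem (by simp [hne12]), Finset.card_singleton]
  have hSc : Sᶜ.card = Fintype.card V - 2 := by rw [Finset.card_compl, hcard2]
  have hfilter : Finset.univ.filter (fun w => w ∉ ({s₁, s₂} : Set V)) = Sᶜ := by
    ext w; simp [hS]
  have hpair : ∀ w, pairSubtree G s₁ s₂ w = InfAux.Desc G ({s₁, s₂} : Set V) w := by
    intro w; ext v
    constructor
    · rintro ⟨h1, h2⟩ s hs p
      rcases Set.mem_insert_iff.1 hs with rfl | hs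
      · exact h1 p
      · have hs2 : s = s₂ := by simpa using hs
        subst hs2
        exact h2 p
    · intro h
      exact ⟨h s₁ (Set.mem_insert s₁ _), h s₂ (by simp)⟩
  rw [hkey, hSc, hfilter]
  congr 1
  exact Finset.prod_congr rfl fun w _ => by rw [hpair w]
end
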